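/- arXiv:math/0005004 — 5 statements merged into one kernel-verified Lean document; each statement's English description precedes it below -/
import Mathlib

section
/- Let 1 ≤ p < ∞, let 𝔖_0 ⊆ 𝔖_1 ⊆ ... ⊆ 𝔖_n be an increasing sequence of σ-algebras on a probability space with 𝔖_0 trivial, and let X_1,...,X_n be nonnegative random variables such that X_k is 𝔖_k-measurable and E[X_k^p] < ∞ for each k. Then E[(Σ_{k=1}^n X_k)^p] ≤ B(p) · max( Σ_{k=1}^n E[X_k^p], E[(Σ_{k=1}^n E[X_k | 𝔖_{k-1}])^p] ) for some constant B(p) depending only on p. -/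
open MeasureTheory ProbabilityTheory Finset
open Filter

/-- Tangent line inequality for `rpow`. -/
private lemma tangent_rpow {p : ℝ} (hp : 1 ≤ p) {c y : ℝ} (hc : 0 ≤ c) (hy : 0 ≤ y) :
    c ^ p + p * c ^ (p - 1) * (y - c) ≤ y ^ p := by
  have hp0 : p ≠ 0 := by positivity
  rcases eq_or_lt_of_le hc with hc0 | hc0
  · rcases eq_or_lt_of_le hp with hp1 | hp1
    · rw [← hc0, ← hp1]
      simp [Real.rpow_one]
    · rw [← hc0, Real.zero_rpow hp0, Real.zero_rpow (sub_ne_zero.mpr hp1.ne')]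
      simpa using Real.rpow_nonneg hy p
  · have hs : -1 ≤ (y - c) / c := by
      rw [le_div_iff₀ hc0]; linarith
    have hb := one_add_mul_self_le_rpow_one_add hs hp
    have h1 : (1 : ℝ) + (y - c) / c = y / c := by field_simp; ring
    rw [h1, Real.div_rpow hy hc0.le] at hb
    have hcp : (0:ℝ) < c ^ p := Real.rpow_pos_of_pos hc0 p
    have hb2 : (1 + p * ((y - c) / c)) * c ^ p ≤ y ^ p := (le_div_iff₀ hcp).mp hb
    have h2 : c ^ p = c ^ (p - 1) * c := by
      rw [← Real.rpow_add_one hc0.ne' (p - 1)]; norm_num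
    calc c ^ p + p * c ^ (p - 1) * (y - c)
        = (1 + p * ((y - c) / c)) * c ^ p := by
          rw [h2]; field_simp
      _ ≤ y ^ p := hb2

private lemma rpow_add_le_aux {p : ℝ} (hp : 1 ≤ p) {a b : ℝ} (ha : 0 ≤ a) (hb : 0 ≤ b) :
    (a + b) ^ p ≤ a ^ p + p * (a + b) ^ (p - 1) * b := by
  have h := tangent_rpow hp (c := a + b) (y := a) (by linarith) ha
  have h' : a - (a + b) = -b := by ring
  rw [h'] at h
  nlinarith [h]

private lemma rpow_two_mul_le {q : ℝ} (hq : 0 ≤ q) {x y : ℝ} (hx : 0 ≤ x) (hy : 0 ≤ y) :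
    (x + y) ^ q ≤ 2 ^ q * (x ^ q + y ^ q) := by
  have hm : x + y ≤ 2 * max x y := by
    rcases le_total x y with h | h
    · rw [max_eq_right h]; linarith
    · rw [max_eq_left h]; linarith
  calc (x + y) ^ q ≤ (2 * max x y) ^ q := Real.rpow_le_rpow (by linarith) hm hq
    _ = 2 ^ q * (max x y) ^ q := Real.mul_rpow (by norm_num) (le_max_of_le_left hx)
    _ ≤ 2 ^ q * (x ^ q + y ^ q) := by
        refine mul_le_mul_of_nonneg_left ?_ (Real.rpow_nonneg (by norm_num) q)
        rcases max_cases x y with ⟨h1, _⟩ | ⟨h1, _⟩ <;> rw [h1]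
        · nlinarith [Real.rpow_nonneg hy q]
        · nlinarith [Real.rpow_nonneg hx q]

private lemma rpow_sub_one_mul_self {p : ℝ} (hp : 1 ≤ p) {x : ℝ} (hx : 0 ≤ x) :
    x ^ (p - 1) * x = x ^ p := by
  rcases eq_or_lt_of_le hx with h | h
  · rw [← h, mul_zero, Real.zero_rpow (by positivity)]
  · rw [← Real.rpow_add_one h.ne' (p - 1)]; norm_num

private lemma mul_rpow_le_add_rpow {p : ℝ} (hp : 1 ≤ p) {u v : ℝ} (hu : 0 ≤ u) (hv : 0 ≤ v) :
    u ^ (p - 1) * v ≤ u ^ p + v ^ p := by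
  rcases le_total v u with h | h
  · calc u ^ (p - 1) * v ≤ u ^ (p - 1) * u :=
        mul_le_mul_of_nonneg_left h (Real.rpow_nonneg hu _)
      _ = u ^ p := rpow_sub_one_mul_self hp hu
      _ ≤ u ^ p + v ^ p := by nlinarith [Real.rpow_nonneg hv p]
  · calc u ^ (p - 1) * v ≤ v ^ (p - 1) * v :=
        mul_le_mul_of_nonneg_right (Real.rpow_le_rpow hu h (by linarith)) hv
      _ = v ^ p := rpow_sub_one_mul_self hp hv
      _ ≤ u ^ p + v ^ p := by nlinarith [Real.rpow_nonneg hu p]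

/-- Conditional Jensen's inequality for `rpow`. -/
private lemma condexp_rpow_le {Ω : Type} {m m0 : MeasurableSpace Ω} {μ : Measure Ω}
    [IsProbabilityMeasure μ] (hm : m ≤ m0) {p : ℝ} (hp : 1 < p) {f : Ω → ℝ}
    (hf0 : ∀ ω, 0 ≤ f ω) (hfi : Integrable f μ)
    (hfp : Integrable (fun ω => f ω ^ p) μ) :
    ∀ᵐ ω ∂μ, (μ[f|m]) ω ^ p ≤ (μ[fun ω => f ω ^ p|m]) ω := by
  have hp0 : (0:ℝ) < p := by linarith
  have hc : ∀ c : ℚ, ∀ᵐ ω ∂μ, 0 ≤ (c:ℝ) →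
      (c:ℝ) ^ p + p * (c:ℝ) ^ (p - 1) * ((μ[f|m]) ω - c) ≤ (μ[fun ω => f ω ^ p|m]) ω := by
    intro c
    by_cases hc0 : 0 ≤ (c:ℝ)
    swap
    · filter_upwards with ω h; exact absurd h hc0
    set a : ℝ := p * (c:ℝ) ^ (p - 1) with ha
    set b : ℝ := (c:ℝ) ^ p - a * c with hb
    have haff : Integrable (fun ω => a * f ω + b) μ := (hfi.const_mul a).add (integrable_const b)
    have hpt : (fun ω => a * f ω + b) ≤ᵐ[μ] (fun ω => f ω ^ p) := by
      filter_upwards with ω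
      have := tangent_rpow hp.le hc0 (hf0 ω)
      simp only [ha, hb]; nlinarith [this]
    have hmono := condExp_mono (m := m) haff hfp hpt
    have hlin : μ[fun ω => a * f ω + b|m] =ᵐ[μ] fun ω => a * (μ[f|m]) ω + b := by
      have h1 : μ[(fun ω => a * f ω) + (fun _ => b)|m]
          =ᵐ[μ] μ[fun ω => a * f ω|m] + μ[fun _ => b|m] :=
        condExp_add (hfi.const_mul a) (integrable_const b) m
      have h2 : μ[fun ω => a * f ω|m] =ᵐ[μ] fun ω => a * (μ[f|m]) ω := by
        have := condExp_smul (μ := μ) (m := m) a f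
        exact this
      have h3 : μ[(fun _ : Ω => b)|m] = fun _ => b := condExp_const hm b
      refine (h1.trans ?_)
      rw [h3]
      filter_upwards [h2] with ω hω
      simp [hω]
    filter_upwards [hmono, hlin] with ω h1 h2 _
    have h4 : a * (μ[f|m]) ω + b ≤ (μ[fun ω => f ω ^ p|m]) ω := by
      rw [← h2]; exact h1
    simp only [ha, hb] at h4 ⊢
    nlinarith [h4]
  rw [← ae_all_iff] at hc
  have hY0 : 0 ≤ᵐ[μ] μ[f|m] := condExp_nonneg (ae_of_all _ hf0)
  filter_upwards [hc, hY0] with ω hω hY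
  set x : ℝ := (μ[f|m]) ω with hx
  set M : ℝ := (μ[fun ω => f ω ^ p|m]) ω with hM
  have hseq : ∀ j : ℕ, ∃ c : ℚ, x < (c:ℝ) ∧ (c:ℝ) < x + 1 / ((j:ℝ) + 1) := by
    intro j
    have h1 : (0:ℝ) < 1 / ((j:ℝ) + 1) := by positivity
    exact exists_rat_btwn (by linarith)
  choose c hc1 hc2 using hseq
  have hcnn : ∀ j, 0 ≤ ((c j : ℚ) : ℝ) := fun j => le_of_lt (lt_of_le_of_lt hY (hc1 j))
  have htend : Tendsto (fun j : ℕ => ((c j : ℚ) : ℝ)) atTop (nhds x) := by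
    refine tendsto_of_tendsto_of_tendsto_of_le_of_le (g := fun _ => x)
      (h := fun j : ℕ => x + 1 / ((j:ℝ) + 1)) tendsto_const_nhds ?_
      (fun j => (hc1 j).le) (fun j => (hc2 j).le)
    simpa using (tendsto_const_nhds : Tendsto (fun _ : ℕ => x) atTop (nhds x)).add tendsto_one_div_add_atTop_nhds_zero_nat
  have hgcont : ContinuousAt (fun t : ℝ => t ^ p + p * t ^ (p - 1) * (x - t)) x := by
    refine ContinuousAt.add (Real.continuousAt_rpow_const x p (Or.inr hp0.le)) ?_
    exact (continuousAt_const.mul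
      (Real.continuousAt_rpow_const x (p - 1) (Or.inr (by linarith)))).mul
      (continuousAt_const.sub continuousAt_id)
  have hgt : Tendsto (fun j : ℕ => ((c j : ℚ) : ℝ) ^ p + p * ((c j : ℚ) : ℝ) ^ (p - 1)
      * (x - ((c j : ℚ) : ℝ))) atTop (nhds (x ^ p + p * x ^ (p - 1) * (x - x))) :=
    (hgcont.tendsto).comp htend
  have hgt' : Tendsto (fun j : ℕ => ((c j : ℚ) : ℝ) ^ p + p * ((c j : ℚ) : ℝ) ^ (p - 1)
      * (x - ((c j : ℚ) : ℝ))) atTop (nhds (x ^ p)) := by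
    simpa using hgt
  refine le_of_tendsto hgt' ?_
  filter_upwards with j
  exact hω (c j) (hcnn j)

/-- Lemma 1 (Hitczenko): martingale version of Rosenthal's inequality for
nonnegative adapted sequences, upper-bound form. -/
theorem lemma1_hitczenko_rosenthal (p : ℝ) (hp : 1 ≤ p) :
    ∃ B : ℝ, 0 < B ∧
      ∀ (Ω : Type) (m0 : MeasurableSpace Ω) (μ : Measure Ω) (_ : IsProbabilityMeasure μ)
        (n : ℕ) (𝔖 : Fin (n + 1) → MeasurableSpace Ω)
        (_ : Monotone 𝔖) (_ : 𝔖 0 = ⊥) (_ : ∀ i, 𝔖 i ≤ m0)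
        (X : Fin n → Ω → ℝ)
        (_ : ∀ k ω, 0 ≤ X k ω)
        (_ : ∀ k : Fin n, Measurable[𝔖 k.succ] (X k))
        (_ : ∀ k, Integrable (fun ω => X k ω ^ p) μ),
        (∫ ω, (∑ k, X k ω) ^ p ∂μ)
          ≤ B * max (∑ k, ∫ ω, X k ω ^ p ∂μ)
              (∫ ω, (∑ k, condExp (𝔖 k.castSucc) μ (X k) ω) ^ p ∂μ) := by
  rcases eq_or_lt_of_le hp with hp1 | hp1
  · -- the case p = 1
    refine ⟨1, one_pos, ?_⟩
    intro Ω m0 μ hμ n 𝔖 h𝔖mono h𝔖0 h𝔖le X hX0 hXmeas hXp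
    subst hp1
    simp only [Real.rpow_one] at hXp ⊢
    have hXint : ∀ k, Integrable (X k) μ := hXp
    rw [integral_finset_sum univ fun k _ => hXint k, one_mul]
    exact le_max_left _ _
  · -- the case 1 < p
    set C : ℝ := p * 2 ^ (p - 1) with hC
    have hp0 : (0:ℝ) < p := by linarith
    have hC0 : 0 < C := by positivity
    refine ⟨2 * C + (2 * C) ^ p, by positivity, ?_⟩
    intro Ω m0 μ hμ n 𝔖 h𝔖mono h𝔖0 h𝔖le X hX0 hXmeas hXp
    have hpne : ENNReal.ofReal p ≠ 0 := by
      simp only [ne_eq, ENNReal.ofReal_eq_zero, not_le]; linarith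
    have hpnt : ENNReal.ofReal p ≠ ⊤ := ENNReal.ofReal_ne_top
    -- basic measurability and integrability of the `X k`
    have hXm : ∀ k, Measurable[m0] (X k) := fun k => (hXmeas k).mono (h𝔖le _) le_rfl
    have hXLp : ∀ k, MemLp (X k) (ENNReal.ofReal p) μ := by
      intro k
      have h2 : MemLp (fun x => ‖X k x‖ ^ (ENNReal.ofReal p).toReal)
          (ENNReal.ofReal p / ENNReal.ofReal p) μ := by
        rw [ENNReal.toReal_ofReal hp0.le, ENNReal.div_self hpne hpnt,
          memLp_one_iff_integrable]
        refine (hXp k).congr (ae_of_all _ fun ω => ?_)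
        simp [Real.norm_of_nonneg (hX0 k ω)]
      exact (memLp_norm_rpow_iff (hXm k).aestronglyMeasurable hpne hpnt).mp h2
    have hXint : ∀ k, Integrable (X k) μ :=
      fun k => (hXLp k).integrable (ENNReal.one_le_ofReal.mpr hp)
    -- the extended sequence and its partial sums
    set X' : ℕ → Ω → ℝ := fun i ω => if h : i < n then X ⟨i, h⟩ ω else 0 with hX'
    set S : ℕ → Ω → ℝ := fun k ω => ∑ i ∈ Finset.range k, X' i ω with hS
    have hX'eq : ∀ (k : ℕ) (hk : k < n), X' k = X ⟨k, hk⟩ := fun k hk =>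
      funext fun ω => dif_pos hk
    have hX'fin : ∀ (k : Fin n), X' (k : ℕ) = X k := fun k => by
      rw [hX'eq _ k.isLt]
    have hX'0 : ∀ i ω, 0 ≤ X' i ω := by
      intro i ω
      by_cases h : i < n
      · rw [hX'eq i h]; exact hX0 _ ω
      · simp only [hX', dif_neg h]; exact le_refl 0
    have hX'm : ∀ i, Measurable[m0] (X' i) := by
      intro i
      by_cases h : i < n
      · rw [hX'eq i h]; exact hXm _
      · have : X' i = fun _ => 0 := funext fun ω => dif_neg h
        rw [this]; exact measurable_const
    have hS0 : ∀ k ω, 0 ≤ S k ω := fun k ω => Finset.sum_nonneg fun i _ => hX'0 i ω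
    have hSm : ∀ k, Measurable[m0] (S k) := fun k => Finset.measurable_sum _ fun i _ => hX'm i
    have hSmono : ∀ {k l : ℕ}, k ≤ l → ∀ ω, S k ω ≤ S l ω := by
      intro k l hkl ω
      exact Finset.sum_le_sum_of_subset_of_nonneg (Finset.range_subset_range.mpr hkl)
        fun i _ _ => hX'0 i ω
    have hSn : ∀ ω, S n ω = ∑ k, X k ω := by
      intro ω
      simp only [hS]
      rw [← Fin.sum_univ_eq_sum_range (fun i => X' i ω) n]
      exact Finset.sum_congr rfl fun k _ => by rw [hX'fin k]
    -- `S n` is in L^p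
    have hSnLp : MemLp (S n) (ENNReal.ofReal p) μ := by
      have h1 := memLp_finset_sum' (μ := μ) univ fun (k : Fin n) _ => hXLp k
      have h2 : S n = ∑ k, X k := by
        funext ω
        rw [hSn ω, Finset.sum_apply]
      rwa [h2]
    have hSnp_int : Integrable (fun ω => S n ω ^ p) μ := by
      have h1 := hSnLp.integrable_norm_rpow hpne hpnt
      rw [ENNReal.toReal_ofReal hp0.le] at h1
      refine h1.congr (ae_of_all _ fun ω => ?_)
      simp [Real.norm_of_nonneg (hS0 n ω)]
    -- pointwise bounds
    have hSX_le : ∀ (k : ℕ) (ω : Ω), S k ω ^ (p - 1) * X' k ω ≤ S n ω ^ p := by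
      intro k ω
      by_cases h : k < n
      · calc S k ω ^ (p - 1) * X' k ω ≤ S n ω ^ (p - 1) * X' k ω :=
            mul_le_mul_of_nonneg_right
              (Real.rpow_le_rpow (hS0 k ω) (hSmono h.le ω) (by linarith)) (hX'0 k ω)
          _ ≤ S n ω ^ (p - 1) * S n ω := by
              refine mul_le_mul_of_nonneg_left ?_ (Real.rpow_nonneg (hS0 n ω) _)
              exact Finset.single_le_sum (fun i _ => hX'0 i ω) (Finset.mem_range.mpr h)
          _ = S n ω ^ p := rpow_sub_one_mul_self hp (hS0 n ω)
      · have h0 : X' k ω = 0 := dif_neg h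
        rw [h0, mul_zero]
        exact Real.rpow_nonneg (hS0 n ω) p
    have hSX_int : ∀ k : ℕ, Integrable (fun ω => S k ω ^ (p - 1) * X' k ω) μ := by
      intro k
      refine Integrable.mono' hSnp_int ?_ (ae_of_all _ fun ω => ?_)
      · exact (((Real.continuous_rpow_const (by linarith : (0:ℝ) ≤ p - 1)).measurable.comp
          (hSm k)).mul (hX'm k)).aestronglyMeasurable
      · rw [Real.norm_of_nonneg (mul_nonneg (Real.rpow_nonneg (hS0 k ω) _) (hX'0 k ω))]
        exact hSX_le k ω
    -- Step A : pointwise telescoping bound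
    have stepA : ∀ ω, S n ω ^ p ≤ ∑ k ∈ range n,
        C * (S k ω ^ (p - 1) * X' k ω + X' k ω ^ p) := by
      intro ω
      have htel := Finset.sum_range_sub (fun k => S k ω ^ p) n
      have h0 : S 0 ω ^ p = 0 := by
        simp only [hS, Finset.range_zero, Finset.sum_empty]
        exact Real.zero_rpow (by positivity)
      have h1 : S n ω ^ p = ∑ k ∈ range n, (S (k + 1) ω ^ p - S k ω ^ p) := by
        rw [htel, h0, sub_zero]
      rw [h1]
      refine Finset.sum_le_sum fun k _ => ?_
      have hsucc : S (k + 1) ω = S k ω + X' k ω := Finset.sum_range_succ _ k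
      have h2 : S (k + 1) ω ^ p ≤ S k ω ^ p + p * (S k ω + X' k ω) ^ (p - 1) * X' k ω := by
        rw [hsucc]; exact rpow_add_le_aux hp (hS0 k ω) (hX'0 k ω)
      have h3 : (S k ω + X' k ω) ^ (p - 1)
          ≤ 2 ^ (p - 1) * (S k ω ^ (p - 1) + X' k ω ^ (p - 1)) :=
        rpow_two_mul_le (by linarith) (hS0 k ω) (hX'0 k ω)
      have h4 : X' k ω ^ (p - 1) * X' k ω = X' k ω ^ p := rpow_sub_one_mul_self hp (hX'0 k ω)
      have h5 : p * (S k ω + X' k ω) ^ (p - 1) * X' k ω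
          ≤ C * (S k ω ^ (p - 1) * X' k ω + X' k ω ^ p) := by
        calc p * (S k ω + X' k ω) ^ (p - 1) * X' k ω
            = p * ((S k ω + X' k ω) ^ (p - 1) * X' k ω) := by ring
          _ ≤ p * (2 ^ (p - 1) * (S k ω ^ (p - 1) + X' k ω ^ (p - 1)) * X' k ω) :=
              mul_le_mul_of_nonneg_left
                (mul_le_mul_of_nonneg_right h3 (hX'0 k ω)) hp0.le
          _ = C * (S k ω ^ (p - 1) * X' k ω + X' k ω ^ (p - 1) * X' k ω) := by
              rw [hC]; ring
          _ = C * (S k ω ^ (p - 1) * X' k ω + X' k ω ^ p) := by rw [h4]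
      linarith [h2, h5]
    -- Step B : integrate
    have hXp' : ∀ k ∈ range n, Integrable (fun ω => X' k ω ^ p) μ := by
      intro k hk
      rw [hX'eq k (Finset.mem_range.mp hk)]
      exact hXp _
    have hB1 : ∫ ω, S n ω ^ p ∂μ ≤ ∑ k ∈ range n,
        C * ((∫ ω, S k ω ^ (p - 1) * X' k ω ∂μ) + ∫ ω, X' k ω ^ p ∂μ) := by
      have hterm : ∀ k ∈ range n,
          Integrable (fun ω => C * (S k ω ^ (p - 1) * X' k ω + X' k ω ^ p)) μ := fun k hk =>
        ((hSX_int k).add (hXp' k hk)).const_mul C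
      have hint : Integrable (fun ω => ∑ k ∈ range n,
          C * (S k ω ^ (p - 1) * X' k ω + X' k ω ^ p)) μ :=
        integrable_finset_sum _ hterm
      calc ∫ ω, S n ω ^ p ∂μ
          ≤ ∫ ω, ∑ k ∈ range n, C * (S k ω ^ (p - 1) * X' k ω + X' k ω ^ p) ∂μ :=
            integral_mono hSnp_int hint stepA
        _ = ∑ k ∈ range n,
            C * ((∫ ω, S k ω ^ (p - 1) * X' k ω ∂μ) + ∫ ω, X' k ω ^ p ∂μ) := by
            rw [integral_finset_sum
              (f := fun k ω => C * (S k ω ^ (p - 1) * X' k ω + X' k ω ^ p)) _ hterm]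
            refine Finset.sum_congr rfl fun k hk => ?_
            rw [integral_const_mul]
            congr 1
            exact integral_add (hSX_int k) (hXp' k hk)
    -- conditional expectations
    set Y : Fin n → Ω → ℝ := fun k => μ[X k|𝔖 k.castSucc] with hYdef
    have hYm : ∀ k, Measurable[m0] (Y k) :=
      fun k => (stronglyMeasurable_condExp.mono (h𝔖le _)).measurable
    have hY0 : ∀ k, 0 ≤ᵐ[μ] Y k := fun k => condExp_nonneg (ae_of_all _ (hX0 k))
    have hJ : ∀ k : Fin n, ∀ᵐ ω ∂μ, Y k ω ^ p ≤ (μ[fun ω => X k ω ^ p|𝔖 k.castSucc]) ω :=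
      fun k => condexp_rpow_le (h𝔖le _) hp1 (hX0 k) (hXint k) (hXp k)
    have hYp_int : ∀ k, Integrable (fun ω => Y k ω ^ p) μ := by
      intro k
      refine Integrable.mono'
        (integrable_condExp (f := fun ω => X k ω ^ p) (m := 𝔖 k.castSucc)) ?_ ?_
      · exact ((Real.continuous_rpow_const hp0.le).measurable.comp (hYm k)).aestronglyMeasurable
      · filter_upwards [hJ k, hY0 k] with ω h1 h2
        rw [Real.norm_of_nonneg (Real.rpow_nonneg h2 _)]
        exact h1
    have hYLp : ∀ k, MemLp (Y k) (ENNReal.ofReal p) μ := by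
      intro k
      have h2 : MemLp (fun x => ‖Y k x‖ ^ (ENNReal.ofReal p).toReal)
          (ENNReal.ofReal p / ENNReal.ofReal p) μ := by
        rw [ENNReal.toReal_ofReal hp0.le, ENNReal.div_self hpne hpnt,
          memLp_one_iff_integrable]
        refine (hYp_int k).congr ?_
        filter_upwards [hY0 k] with ω h
        rw [Real.norm_of_nonneg h]
      exact (memLp_norm_rpow_iff (hYm k).aestronglyMeasurable hpne hpnt).mp h2
    set T : Ω → ℝ := fun ω => ∑ k, Y k ω with hTdef
    have hTm : Measurable[m0] T := Finset.measurable_sum _ fun k _ => hYm k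
    have hT0 : 0 ≤ᵐ[μ] T := by
      have hall : ∀ᵐ ω ∂μ, ∀ k : Fin n, 0 ≤ Y k ω := by
        rw [ae_all_iff]
        intro k
        filter_upwards [hY0 k] with ω h using h
      filter_upwards [hall] with ω hω
      exact Finset.sum_nonneg fun k _ => hω k
    have hTLp : MemLp T (ENNReal.ofReal p) μ := by
      have h1 := memLp_finset_sum' (μ := μ) univ fun (k : Fin n) _ => hYLp k
      have h2 : (∑ k, Y k) = T := by
        funext ω
        rw [hTdef, Finset.sum_apply]
      rwa [h2] at h1
    have hTp_int : Integrable (fun ω => T ω ^ p) μ := by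
      have h1 := hTLp.integrable_norm_rpow hpne hpnt
      rw [ENNReal.toReal_ofReal hp0.le] at h1
      refine h1.congr ?_
      filter_upwards [hT0] with ω h
      simp [Real.norm_of_nonneg h]
    -- Step C : replace X' k by its conditional expectation
    have stepC : ∀ k : Fin n,
        ∫ ω, S (k : ℕ) ω ^ (p - 1) * X' (k : ℕ) ω ∂μ
          = ∫ ω, S (k : ℕ) ω ^ (p - 1) * Y k ω ∂μ := by
      intro k
      have hmkle : 𝔖 k.castSucc ≤ m0 := h𝔖le _
      have hSkm : Measurable[𝔖 k.castSucc] (S (k : ℕ)) := by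
        refine Finset.measurable_sum _ fun i hi => ?_
        have hik : i < (k : ℕ) := Finset.mem_range.mp hi
        have hin : i < n := lt_trans hik k.isLt
        rw [hX'eq i hin]
        refine (hXmeas ⟨i, hin⟩).mono (h𝔖mono ?_) le_rfl
        simp only [Fin.le_def, Fin.succ_mk, Fin.coe_castSucc]
        exact hik
      have hg : StronglyMeasurable[𝔖 k.castSucc] (fun ω => S (k : ℕ) ω ^ (p - 1)) :=
        ((Real.continuous_rpow_const (by linarith : (0:ℝ) ≤ p - 1)).measurable.comp
          hSkm).stronglyMeasurable
      have hfg : Integrable ((fun ω => S (k : ℕ) ω ^ (p - 1)) * X k) μ := by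
        have h1 := hSX_int (k : ℕ)
        rw [hX'fin k] at h1
        exact h1
      have hpull := condExp_mul_of_stronglyMeasurable_left hg hfg (hXint k)
      calc ∫ ω, S (k : ℕ) ω ^ (p - 1) * X' (k : ℕ) ω ∂μ
          = ∫ ω, ((fun ω => S (k : ℕ) ω ^ (p - 1)) * X k) ω ∂μ := by
            rw [hX'fin k]; rfl
        _ = ∫ ω, (μ[(fun ω => S (k : ℕ) ω ^ (p - 1)) * X k|𝔖 k.castSucc]) ω ∂μ :=
            (integral_condExp hmkle).symm
        _ = ∫ ω, S (k : ℕ) ω ^ (p - 1) * Y k ω ∂μ := by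
            refine integral_congr_ae ?_
            filter_upwards [hpull] with ω hω
            rw [hω]; rfl
    -- rewrite the bound with conditional expectations
    have hB2 : ∫ ω, S n ω ^ p ∂μ ≤
        C * ((∑ k : Fin n, ∫ ω, S (k : ℕ) ω ^ (p - 1) * Y k ω ∂μ)
          + ∑ k, ∫ ω, X k ω ^ p ∂μ) := by
      refine hB1.trans (le_of_eq ?_)
      rw [← Fin.sum_univ_eq_sum_range
        (fun k => C * ((∫ ω, S k ω ^ (p - 1) * X' k ω ∂μ) + ∫ ω, X' k ω ^ p ∂μ)) n]
      have he : ∀ k : Fin n,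
          C * ((∫ ω, S (k : ℕ) ω ^ (p - 1) * X' (k : ℕ) ω ∂μ) + ∫ ω, X' (k : ℕ) ω ^ p ∂μ)
            = C * ((∫ ω, S (k : ℕ) ω ^ (p - 1) * Y k ω ∂μ) + ∫ ω, X k ω ^ p ∂μ) := by
        intro k
        rw [stepC k, hX'fin k]
      rw [Finset.sum_congr rfl fun k _ => he k]
      simp only [mul_add]
      rw [Finset.sum_add_distrib, ← Finset.mul_sum, ← Finset.mul_sum]
    -- Step D : compare with S n and T
    have hSY_int : ∀ k : Fin n, Integrable (fun ω => S (k : ℕ) ω ^ (p - 1) * Y k ω) μ := by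
      intro k
      refine Integrable.mono' (hSnp_int.add (hYp_int k)) ?_ ?_
      · exact (((Real.continuous_rpow_const (by linarith : (0:ℝ) ≤ p - 1)).measurable.comp
          (hSm (k : ℕ))).mul (hYm k)).aestronglyMeasurable
      · filter_upwards [hY0 k] with ω h
        rw [Real.norm_of_nonneg (mul_nonneg (Real.rpow_nonneg (hS0 _ ω) _) h)]
        calc S (k : ℕ) ω ^ (p - 1) * Y k ω ≤ S n ω ^ (p - 1) * Y k ω :=
            mul_le_mul_of_nonneg_right
              (Real.rpow_le_rpow (hS0 _ ω) (hSmono k.isLt.le ω) (by linarith)) h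
          _ ≤ S n ω ^ p + Y k ω ^ p := mul_rpow_le_add_rpow hp (hS0 n ω) h
    have hSnT_int : Integrable (fun ω => S n ω ^ (p - 1) * T ω) μ := by
      refine Integrable.mono' (hSnp_int.add hTp_int) ?_ ?_
      · exact (((Real.continuous_rpow_const (by linarith : (0:ℝ) ≤ p - 1)).measurable.comp
          (hSm n)).mul hTm).aestronglyMeasurable
      · filter_upwards [hT0] with ω h
        rw [Real.norm_of_nonneg (mul_nonneg (Real.rpow_nonneg (hS0 n ω) _) h)]
        exact mul_rpow_le_add_rpow hp (hS0 n ω) h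
    have stepD : ∑ k : Fin n, ∫ ω, S (k : ℕ) ω ^ (p - 1) * Y k ω ∂μ
        ≤ ∫ ω, S n ω ^ (p - 1) * T ω ∂μ := by
      rw [← integral_finset_sum univ fun k _ => hSY_int k]
      refine integral_mono_ae (integrable_finset_sum _ fun k _ => hSY_int k) hSnT_int ?_
      have hall : ∀ᵐ ω ∂μ, ∀ k : Fin n, 0 ≤ Y k ω := by
        rw [ae_all_iff]
        intro k
        filter_upwards [hY0 k] with ω h using h
      filter_upwards [hall] with ω hω
      calc ∑ k : Fin n, S (k : ℕ) ω ^ (p - 1) * Y k ω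
          ≤ ∑ k : Fin n, S n ω ^ (p - 1) * Y k ω :=
            Finset.sum_le_sum fun k _ => mul_le_mul_of_nonneg_right
              (Real.rpow_le_rpow (hS0 _ ω) (hSmono k.isLt.le ω) (by linarith)) (hω k)
        _ = S n ω ^ (p - 1) * T ω := (Finset.mul_sum univ (fun k => Y k ω) (S n ω ^ (p - 1))).symm
    -- Step E : Hölder's inequality
    have hpq : (p / (p - 1)).HolderConjugate p := (Real.HolderConjugate.conjExponent hp1).symm
    have hSq : MemLp (fun ω => S n ω ^ (p - 1)) (ENNReal.ofReal (p / (p - 1))) μ := by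
      have h1 := hSnLp.norm_rpow_div (ENNReal.ofReal (p - 1))
      rw [ENNReal.toReal_ofReal (by linarith : (0:ℝ) ≤ p - 1),
        ← ENNReal.ofReal_div_of_pos (by linarith : (0:ℝ) < p - 1)] at h1
      refine h1.ae_eq (ae_of_all _ fun ω => ?_)
      simp [Real.norm_of_nonneg (hS0 n ω)]
    have hHolder : ∫ ω, S n ω ^ (p - 1) * T ω ∂μ
        ≤ (∫ ω, (S n ω ^ (p - 1)) ^ (p / (p - 1)) ∂μ) ^ (1 / (p / (p - 1)))
          * (∫ ω, T ω ^ p ∂μ) ^ (1 / p) :=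
      integral_mul_le_Lp_mul_Lq_of_nonneg hpq
        (ae_of_all _ fun ω => Real.rpow_nonneg (hS0 n ω) _) hT0 hSq hTLp
    have hinner : (∫ ω, (S n ω ^ (p - 1)) ^ (p / (p - 1)) ∂μ) = ∫ ω, S n ω ^ p ∂μ := by
      refine integral_congr_ae (ae_of_all _ fun ω => ?_)
      show (S n ω ^ (p - 1)) ^ (p / (p - 1)) = S n ω ^ p
      rw [← Real.rpow_mul (hS0 n ω)]
      congr 1
      rw [mul_comm]
      exact div_mul_cancel₀ p (sub_ne_zero.mpr hp1.ne')
    rw [hinner] at hHolder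
    -- final algebra
    set a : ℝ := ∫ ω, S n ω ^ p ∂μ with hadef
    set A : ℝ := ∑ k, ∫ ω, X k ω ^ p ∂μ with hAdef
    set Bt : ℝ := ∫ ω, T ω ^ p ∂μ with hBtdef
    have ha0 : 0 ≤ a := integral_nonneg fun ω => Real.rpow_nonneg (hS0 n ω) p
    have hA0 : 0 ≤ A := Finset.sum_nonneg fun k _ =>
      integral_nonneg fun ω => Real.rpow_nonneg (hX0 k ω) p
    have hmax0 : 0 ≤ max A Bt := le_trans hA0 (le_max_left _ _)
    have h2C0 : (0:ℝ) ≤ (2 * C) ^ p := Real.rpow_nonneg (by linarith) p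
    have key : a ≤ C * (a ^ (1 / (p / (p - 1))) * Bt ^ (1 / p)) + C * A := by
      have h1 := hB2.trans (mul_le_mul_of_nonneg_left
        (add_le_add_left (stepD.trans hHolder) A) hC0.le)
      calc a ≤ C * (a ^ (1 / (p / (p - 1))) * Bt ^ (1 / p) + A) := h1
        _ = C * (a ^ (1 / (p / (p - 1))) * Bt ^ (1 / p)) + C * A := by ring
    have hgoalL : ∫ ω, (∑ k, X k ω) ^ p ∂μ = a := by
      refine integral_congr_ae (ae_of_all _ fun ω => ?_)
      show (∑ k, X k ω) ^ p = S n ω ^ p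
      rw [hSn ω]
    have hfinal : a ≤ (2 * C + (2 * C) ^ p) * max A Bt := by
      by_cases hcase : a ≤ 2 * C * A
      · calc a ≤ 2 * C * A := hcase
          _ ≤ 2 * C * max A Bt :=
            mul_le_mul_of_nonneg_left (le_max_left _ _) (by linarith)
          _ ≤ (2 * C + (2 * C) ^ p) * max A Bt := by
            rw [add_mul]
            have h8 : 0 ≤ (2 * C) ^ p * max A Bt := mul_nonneg h2C0 hmax0
            linarith
      · push_neg at hcase
        have hapos : 0 < a := lt_of_le_of_lt (by positivity) hcase
        have h3 : a / 2 < C * (a ^ (1 / (p / (p - 1))) * Bt ^ (1 / p)) := by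
          nlinarith [key]
        have hexp : 1 / (p / (p - 1)) + 1 / p = 1 := by
          rw [one_div, one_div, hpq.inv_add_inv_eq_one]
        have hsplit : a ^ (1 / (p / (p - 1))) * a ^ (1 / p) = a := by
          rw [← Real.rpow_add hapos, hexp, Real.rpow_one]
        have hae : 0 < a ^ (1 / (p / (p - 1))) := Real.rpow_pos_of_pos hapos _
        have h5 : a ^ (1 / (p / (p - 1))) * a ^ (1 / p)
            < a ^ (1 / (p / (p - 1))) * (2 * C * Bt ^ (1 / p)) := by
          rw [hsplit]; nlinarith [h3]
        have h4 : a ^ (1 / p) < 2 * C * Bt ^ (1 / p) := (mul_lt_mul_iff_right₀ hae).mp h5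
        have hBt0 : 0 ≤ Bt := integral_nonneg_of_ae
          (by filter_upwards [hT0] with ω h; exact Real.rpow_nonneg h p)
        have h7 : (a ^ (1 / p)) ^ p ≤ (2 * C * Bt ^ (1 / p)) ^ p :=
          Real.rpow_le_rpow (Real.rpow_nonneg ha0 _) h4.le hp0.le
        rw [← Real.rpow_mul ha0, one_div, inv_mul_cancel₀ (ne_of_gt hp0), Real.rpow_one,
          Real.mul_rpow (by positivity) (Real.rpow_nonneg hBt0 _), ← Real.rpow_mul hBt0,
          inv_mul_cancel₀ (ne_of_gt hp0), Real.rpow_one] at h7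
        calc a ≤ (2 * C) ^ p * Bt := h7
          _ ≤ (2 * C) ^ p * max A Bt := mul_le_mul_of_nonneg_left (le_max_right _ _) h2C0
          _ ≤ (2 * C + (2 * C) ^ p) * max A Bt := by
            rw [add_mul]
            have h8 : 0 ≤ 2 * C * max A Bt := mul_nonneg (by linarith) hmax0
            linarith
    calc ∫ ω, (∑ k, X k ω) ^ p ∂μ = a := hgoalL
      _ ≤ (2 * C + (2 * C) ^ p) * max A Bt := hfinal
      _ = (2 * C + (2 * C) ^ p) * max (∑ k, ∫ ω, X k ω ^ p ∂μ)
          (∫ ω, (∑ k, condExp (𝔖 k.castSucc) μ (X k) ω) ^ p ∂μ) := rfl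
end

section
/- Let (X_n)_{n≥1} be a sequence of nonnegative random variables, A_r = Σ_{n=1}^∞ E[X_n^r], B_γ = (Σ_{n=1}^∞ E[X_n^γ])^{1/γ}, with A_p < ∞ and B_γ < ∞. Then for all 1 ≤ γ < s < p, max(A_s, B_γ^s) ≤ (max(A_p, B_γ^p))^{s/p}. -/
open MeasureTheory ENNReal

/-- `A_r = Σ_n E[X_n^r]`, as an extended nonnegative real. -/
noncomputable def momSum {Ω : Type*} [MeasurableSpace Ω] (μ : Measure Ω)
    (X : ℕ → Ω → ℝ) (r : ℝ) : ℝ≥0∞ :=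
  ∑' n, ∫⁻ ω, ENNReal.ofReal (X n ω ^ r) ∂μ

/-- Hölder interpolation for `lintegral`. -/
lemma lintegral_interp {α : Type*} [MeasurableSpace α] (μ : Measure α)
    {f : α → ℝ≥0∞} (hf : AEMeasurable f μ) {a b u v : ℝ}
    (ha : 0 < a) (hb : 0 < b) (hab : a + b = 1) (hu : 0 ≤ u) (hv : 0 ≤ v) :
    ∫⁻ x, f x ^ (a * u + b * v) ∂μ
      ≤ (∫⁻ x, f x ^ u ∂μ) ^ a * (∫⁻ x, f x ^ v ∂μ) ^ b := by
  have ha1 : a < 1 := by linarith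
  have hpq : (1 / a).HolderConjugate (1 / b) := by
    exact Real.holderConjugate_one_div ha hb hab
  have h := ENNReal.lintegral_mul_le_Lp_mul_Lq μ hpq
    (f := fun x => f x ^ (a * u)) (g := fun x => f x ^ (b * v))
    (hf.pow_const _) (hf.pow_const _)
  calc ∫⁻ x, f x ^ (a * u + b * v) ∂μ
      = ∫⁻ x, ((fun x => f x ^ (a * u)) * fun x => f x ^ (b * v)) x ∂μ := by
        refine lintegral_congr fun x => ?_
        simp only [Pi.mul_apply]
        exact ENNReal.rpow_add_of_nonneg _ _ (by positivity) (by positivity)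
    _ ≤ (∫⁻ x, (f x ^ (a * u)) ^ (1 / a) ∂μ) ^ (1 / (1 / a))
        * (∫⁻ x, (f x ^ (b * v)) ^ (1 / b) ∂μ) ^ (1 / (1 / b)) := h
    _ = (∫⁻ x, f x ^ u ∂μ) ^ a * (∫⁻ x, f x ^ v ∂μ) ^ b := by
        rw [one_div_one_div, one_div_one_div]
        congr 2 <;> refine lintegral_congr fun x => ?_ <;>
          rw [← ENNReal.rpow_mul] <;> congr 1 <;> field_simp <;> ring

/-- Lemma 2, part 3: `max(A_s, B_γ^s) ≤ (max(A_p, B_γ^p))^{s/p}`. -/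
theorem lemma2_part3
    {Ω : Type*} [MeasurableSpace Ω] (μ : Measure Ω) [IsProbabilityMeasure μ]
    (X : ℕ → Ω → ℝ) (hnn : ∀ n ω, 0 ≤ X n ω) (hmeas : ∀ n, Measurable (X n))
    (γ s p : ℝ) (hγ : 1 ≤ γ) (hγs : γ < s) (hsp : s < p)
    (hAp : momSum μ X p ≠ ⊤) (hBγ : momSum μ X γ ≠ ⊤) :
    max (momSum μ X s) ((momSum μ X γ ^ (1 / γ)) ^ s)
      ≤ (max (momSum μ X p) ((momSum μ X γ ^ (1 / γ)) ^ p)) ^ (s / p) := by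
  have hγ0 : 0 < γ := lt_of_lt_of_le zero_lt_one hγ
  have hs0 : 0 < s := hγ0.trans hγs
  have hp0 : 0 < p := hs0.trans hsp
  set a : ℝ := (p - s) / (p - γ) with ha_def
  set b : ℝ := (s - γ) / (p - γ) with hb_def
  have hpγ : (0:ℝ) < p - γ := by linarith
  have ha : 0 < a := div_pos (by linarith) hpγ
  have hb : 0 < b := div_pos (by linarith) hpγ
  have hab : a + b = 1 := by rw [ha_def, hb_def]; field_simp; ring
  have hsab : a * γ + b * p = s := by rw [ha_def, hb_def]; field_simp; ring
  set Aγ := momSum μ X γ with hAγ_def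
  set Ap := momSum μ X p with hAp_def
  set M := max Ap ((Aγ ^ (1 / γ)) ^ p) with hM_def
  -- rewrite integrands using g n = ofReal ∘ X n
  set g : ℕ → Ω → ℝ≥0∞ := fun n ω => ENNReal.ofReal (X n ω) with hg_def
  have hgmeas : ∀ n, Measurable (g n) := fun n => (hmeas n).ennreal_ofReal
  have hmom : ∀ r : ℝ, 0 ≤ r → momSum μ X r = ∑' n, ∫⁻ ω, g n ω ^ r ∂μ := by
    intro r hr
    refine tsum_congr fun n => lintegral_congr fun ω => ?_
    exact (ENNReal.ofReal_rpow_of_nonneg (hnn n ω) hr).symm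
  -- basic facts about M
  have hApM : Ap ≤ M := le_max_left _ _
  have hBpM : (Aγ ^ (1 / γ)) ^ p ≤ M := le_max_right _ _
  have hAγM : Aγ ≤ M ^ (γ / p) := by
    have h1 : ((Aγ ^ (1 / γ)) ^ p) ^ (γ / p) = Aγ := by
      rw [← ENNReal.rpow_mul, ← ENNReal.rpow_mul]
      rw [show p * (γ / p) = γ by rw [mul_comm, div_mul_cancel₀ _ hp0.ne'],
        one_div_mul_cancel hγ0.ne', ENNReal.rpow_one]
    calc Aγ = ((Aγ ^ (1 / γ)) ^ p) ^ (γ / p) := h1.symm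
      _ ≤ M ^ (γ / p) := ENNReal.rpow_le_rpow hBpM (by positivity)
  -- the B part
  have hB : (Aγ ^ (1 / γ)) ^ s ≤ M ^ (s / p) := by
    have : (Aγ ^ (1 / γ)) ^ s = ((Aγ ^ (1 / γ)) ^ p) ^ (s / p) := by
      rw [← ENNReal.rpow_mul (Aγ ^ (1 / γ)) p (s / p),
        show p * (s / p) = s by rw [mul_comm, div_mul_cancel₀ _ hp0.ne']]
    rw [this]
    exact ENNReal.rpow_le_rpow hBpM (by positivity)
  -- the A part
  have hA : momSum μ X s ≤ M ^ (s / p) := by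
    -- pointwise Hölder for each n
    have hn : ∀ n, ∫⁻ ω, g n ω ^ s ∂μ
        ≤ (∫⁻ ω, g n ω ^ γ ∂μ) ^ a * (∫⁻ ω, g n ω ^ p ∂μ) ^ b := by
      intro n
      have := lintegral_interp μ (hgmeas n).aemeasurable ha hb hab hγ0.le hp0.le
      rwa [hsab] at this
    -- Hölder for sums via the counting measure
    have hsum : momSum μ X s ≤ Aγ ^ a * Ap ^ b := by
      rw [hmom s hs0.le, hAγ_def, hAp_def, hmom γ hγ0.le, hmom p hp0.le]
      have hpq : (1 / a).HolderConjugate (1 / b) := by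
        exact Real.holderConjugate_one_div ha hb hab
      have h := ENNReal.lintegral_mul_le_Lp_mul_Lq (Measure.count : Measure ℕ) hpq
        (f := fun n => (∫⁻ ω, g n ω ^ γ ∂μ) ^ a) (g := fun n => (∫⁻ ω, g n ω ^ p ∂μ) ^ b)
        (measurable_of_countable _).aemeasurable (measurable_of_countable _).aemeasurable
      rw [lintegral_count] at h
      calc ∑' n, ∫⁻ ω, g n ω ^ s ∂μ
          ≤ ∑' n, ((fun n => (∫⁻ ω, g n ω ^ γ ∂μ) ^ a)
              * fun n => (∫⁻ ω, g n ω ^ p ∂μ) ^ b) n := ENNReal.tsum_le_tsum fun n => hn n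
        _ ≤ (∫⁻ n, ((∫⁻ ω, g n ω ^ γ ∂μ) ^ a) ^ (1 / a) ∂Measure.count) ^ (1 / (1 / a))
            * (∫⁻ n, ((∫⁻ ω, g n ω ^ p ∂μ) ^ b) ^ (1 / b) ∂Measure.count) ^ (1 / (1 / b)) := h
        _ = (∑' n, ∫⁻ ω, g n ω ^ γ ∂μ) ^ a * (∑' n, ∫⁻ ω, g n ω ^ p ∂μ) ^ b := by
            rw [one_div_one_div, one_div_one_div, lintegral_count, lintegral_count]
            congr 2
            · refine tsum_congr fun n => ?_
              rw [← ENNReal.rpow_mul,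
                show a * (1/a) = 1 from mul_one_div_cancel ha.ne', ENNReal.rpow_one]
            · refine tsum_congr fun n => ?_
              rw [← ENNReal.rpow_mul,
                show b * (1/b) = 1 from mul_one_div_cancel hb.ne', ENNReal.rpow_one]
    -- finish
    calc momSum μ X s ≤ Aγ ^ a * Ap ^ b := hsum
      _ ≤ (M ^ (γ / p)) ^ a * M ^ b := by
          exact mul_le_mul' (ENNReal.rpow_le_rpow hAγM ha.le) (ENNReal.rpow_le_rpow hApM hb.le)
      _ = M ^ (γ / p * a) * M ^ b := by rw [← ENNReal.rpow_mul]
      _ = M ^ (γ / p * a + b) := (ENNReal.rpow_add_of_nonneg _ _ (by positivity) hb.le).symm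
      _ = M ^ (s / p) := by
          congr 1
          rw [ha_def, hb_def]
          field_simp
          ring
  exact max_le hA hB
end

section
/- Let X_1,...,X_m be i.i.d. random variables with values in a measurable space S, let s ≥ 1, and let Y : S^m → ℝ be a nonnegative symmetric function with E[Y(X_1,...,X_m)^{2s}] < ∞. Then for all 0 ≤ k, l ≤ m and n ≥ 1, n^{k+l+s(2m-k-l)} · E[(E[Y | X_1,...,X_k])^s] · E[(E[Y | X_1,...,X_l])^s] ≤ B(s,m) · max( n^{k+2s(m-k)} E[(E[Y | X_1,...,X_k])^{2s}], n^{l+2s(m-l)} E[(E[Y | X_1,...,X_l])^{2s}], n^{2sm} (E[Y])^{2s} ), where Y denotes Y(X_1,...,X_m) and B(s,m) depends only on s and m. -/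
open MeasureTheory ProbabilityTheory Finset

/-- The symmetric statistic `T_n = Σ_{1 ≤ i_1 < ... < i_m ≤ n} Y(X_{i_1},...,X_{i_m})`,
where the sum ranges over strictly increasing index tuples. -/
noncomputable def symStat {Ω S : Type*} {n m : ℕ} (X : Fin n → Ω → S)
    (Y : (Fin m → S) → ℝ) (ω : Ω) : ℝ :=
  ∑ g ∈ Finset.univ.filter (fun g : Fin m → Fin n => ∀ a b : Fin m, a < b → g a < g b),
    Y (fun j => X (g j) ω)

/-- The σ-algebra `σ(X_i : I i)` generated by a subfamily of random variables. -/
def sigmaOf {Ω S ι : Type*} [MeasurableSpace S] (X : ι → Ω → S) (I : ι → Prop) :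
    MeasurableSpace Ω :=
  ⨆ i, ⨆ _ : I i, MeasurableSpace.comap (X i) inferInstance

open Filter
open scoped ENNReal

lemma tangent_line_le {p x q : ℝ} (hp : 1 < p) (hx : 0 ≤ x) (hq : 0 ≤ q) :
    p * q ^ (p - 1) * x - (p - 1) * q ^ p ≤ x ^ p := by
  have hp0 : 0 < p := by linarith
  have hp1 : 0 < p - 1 := by linarith
  have hpq : p.HolderConjugate (p / (p - 1)) := (Real.holderConjugate_iff_eq_conjExponent hp).2 rfl
  have hy := Real.young_inequality_of_nonneg hx (Real.rpow_nonneg hq (p - 1)) hpq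
  have hqq : (q ^ (p - 1)) ^ (p / (p - 1)) = q ^ p := by
    rw [← Real.rpow_mul hq]; congr 1; field_simp
  rw [hqq] at hy
  have h1 : p * (x * q ^ (p - 1)) ≤ p * (x ^ p / p + q ^ p / (p / (p - 1))) :=
    mul_le_mul_of_nonneg_left hy hp0.le
  have h2 : p * (x ^ p / p + q ^ p / (p / (p - 1))) = x ^ p + (p - 1) * q ^ p := by
    field_simp
  nlinarith [h1]

/-- Conditional Jensen for `x ↦ x^p`: the `p`-th power of a conditional expectation of a
nonnegative function is a.e. bounded by the conditional expectation of the `p`-th power;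
in particular it is integrable. -/
lemma condexp_rpow_le_ae {Ω : Type*} {m' : MeasurableSpace Ω} [m0 : MeasurableSpace Ω]
    (hm : m' ≤ m0) {μ : Measure Ω} [IsProbabilityMeasure μ] {f : Ω → ℝ}
    (hf0 : 0 ≤ᵐ[μ] f) (hfi : Integrable f μ) {p : ℝ} (hp : 1 < p)
    (hfp : Integrable (fun ω => f ω ^ p) μ) :
    ∀ᵐ ω ∂μ, (condExp m' μ f ω) ^ p ≤ condExp m' μ (fun ω' => f ω' ^ p) ω := by
  have hp0 : 0 < p := by linarith
  set g := condExp m' μ f with hgdef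
  set H := condExp m' μ (fun ω' => f ω' ^ p) with hHdef
  have hg0 : 0 ≤ᵐ[μ] g := condExp_nonneg hf0
  have step : ∀ q : ℝ, 0 ≤ q →
      ∀ᵐ ω ∂μ, p * q ^ (p - 1) * g ω - (p - 1) * q ^ p ≤ H ω := by
    intro q hq
    set c : ℝ := p * q ^ (p - 1) with hc
    set d : ℝ := (p - 1) * q ^ p with hd
    have hint1 : Integrable (fun ω => c * f ω - d) μ :=
      (hfi.const_mul c).sub (integrable_const d)
    have hptw : (fun ω => c * f ω - d) ≤ᵐ[μ] fun ω => f ω ^ p := by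
      filter_upwards [hf0] with ω hω
      exact tangent_line_le hp hω hq
    have hmono : condExp m' μ (fun ω => c * f ω - d) ≤ᵐ[μ] H :=
      condExp_mono hint1 hfp hptw
    have heq : condExp m' μ (fun ω => c * f ω - d)
        =ᵐ[μ] fun ω => c * g ω - d := by
      have h1 : (fun ω => c * f ω - d) = (c • f) - (fun _ => d) := by
        funext ω; simp [smul_eq_mul]
      rw [h1]
      refine (condExp_sub (hfi.smul c) (integrable_const d) m').trans ?_
      have h2 := condExp_smul (μ := μ) (m := m') c f
      have h3 : condExp m' μ (fun _ => d) = fun _ => d := condExp_const (μ := μ) hm d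
      filter_upwards [h2] with ω hω
      simp only [Pi.sub_apply, hω, Pi.smul_apply, smul_eq_mul, h3]
      rfl
    filter_upwards [hmono, heq] with ω h1 h2
    rw [← h2]
    exact h1
  have hae : ∀ᵐ ω ∂μ, ∀ q : ℚ, 0 ≤ (q : ℝ) →
      p * (q : ℝ) ^ (p - 1) * g ω - (p - 1) * (q : ℝ) ^ p ≤ H ω := by
    rw [ae_all_iff]
    intro q
    by_cases hq : 0 ≤ (q : ℝ)
    · filter_upwards [step (q : ℝ) hq] with ω h _
      exact h
    · filter_upwards with ω h
      exact absurd h hq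
  filter_upwards [hae, hg0] with ω h hω
  simp only [Pi.zero_apply] at hω
  rcases eq_or_lt_of_le hω with h0 | hpos
  · rw [← h0, Real.zero_rpow hp0.ne']
    have h00 := h 0 (by norm_num)
    have h01 : p * (0 : ℝ) ^ (p - 1) * g ω - (p - 1) * (0 : ℝ) ^ p ≤ H ω := by
      simpa using h00
    rw [Real.zero_rpow (by linarith : p - 1 ≠ 0), Real.zero_rpow hp0.ne'] at h01
    linarith [h01]
  · set x := g ω with hx
    have hxpos : 0 < x := hpos
    have cont : ContinuousAt (fun y : ℝ => p * y ^ (p - 1) * x - (p - 1) * y ^ p) x := by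
      have c1 : ContinuousAt (fun y : ℝ => y ^ (p - 1)) x :=
        Real.continuousAt_rpow_const x (p - 1) (Or.inl hxpos.ne')
      have c2 : ContinuousAt (fun y : ℝ => y ^ p) x :=
        Real.continuousAt_rpow_const x p (Or.inl hxpos.ne')
      exact ((continuousAt_const.mul c1).mul continuousAt_const).sub
        (continuousAt_const.mul c2)
    choose u hu1 hu2 using fun n : ℕ =>
      exists_rat_btwn (lt_add_of_pos_right x (by positivity : (0:ℝ) < 1 / ((n : ℝ) + 1)))
    have hten : Tendsto (fun n : ℕ => ((u n : ℚ) : ℝ)) atTop (nhds x) := by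
      have hupper : Tendsto (fun n : ℕ => x + 1 / ((n : ℝ) + 1)) atTop (nhds x) := by
        have := tendsto_const_nhds (x := x) (f := atTop (α := ℕ)) |>.add
          tendsto_one_div_add_atTop_nhds_zero_nat
        simpa using this
      exact tendsto_of_tendsto_of_tendsto_of_le_of_le tendsto_const_nhds hupper
        (fun n => (hu1 n).le) (fun n => (hu2 n).le)
    have hlim := (cont.tendsto).comp hten
    have hle : ∀ n : ℕ, p * ((u n : ℚ) : ℝ) ^ (p - 1) * x - (p - 1) * ((u n : ℚ) : ℝ) ^ p
        ≤ H ω := fun n => h (u n) (le_of_lt (lt_of_le_of_lt hω (hu1 n)))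
    have hfx : p * x ^ (p - 1) * x - (p - 1) * x ^ p ≤ H ω :=
      le_of_tendsto hlim (Eventually.of_forall hle)
    have hxx : x ^ (p - 1) * x = x ^ p := by
      conv_rhs => rw [show p = (p - 1) + 1 by ring, Real.rpow_add hxpos, Real.rpow_one]
    calc x ^ p = p * x ^ (p - 1) * x - (p - 1) * x ^ p := by
          rw [mul_assoc, hxx]; ring
      _ ≤ H ω := hfx

lemma condexp_rpow_integrable {Ω : Type*} {m' : MeasurableSpace Ω} [m0 : MeasurableSpace Ω]
    (hm : m' ≤ m0) {μ : Measure Ω} [IsProbabilityMeasure μ] {f : Ω → ℝ}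
    (hf0 : 0 ≤ᵐ[μ] f) (hfi : Integrable f μ) {p : ℝ} (hp : 1 < p)
    (hfp : Integrable (fun ω => f ω ^ p) μ) :
    Integrable (fun ω => (condExp m' μ f ω) ^ p) μ := by
  refine Integrable.mono' (integrable_condExp (m := m') (f := fun ω' => f ω' ^ p))
    ?_ ?_
  · exact ((stronglyMeasurable_condExp.mono hm).measurable.pow measurable_const).aestronglyMeasurable
  · filter_upwards [condexp_rpow_le_ae hm hf0 hfi hp hfp, condExp_nonneg (m := m') hf0]
      with ω h1 h2
    rw [Real.norm_of_nonneg (Real.rpow_nonneg h2 p)]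
    exact h1


/-- Interpolation (Lyapunov / Hölder): for a nonnegative function with integrable `2s`-power,
`∫ g^s ≤ (∫ g^(2s))^θ * (∫ g)^(1-θ)` with `θ = (s-1)/(2s-1)`. -/
lemma integral_rpow_interpolation {Ω : Type*} [MeasurableSpace Ω] {μ : Measure Ω}
    {g : Ω → ℝ} (hgm : AEStronglyMeasurable g μ) (hg0 : 0 ≤ᵐ[μ] g) {s : ℝ} (hs : 1 ≤ s)
    (hg1 : Integrable g μ) (hg2 : Integrable (fun ω => g ω ^ (2 * s)) μ) :
    ∫ ω, g ω ^ s ∂μ ≤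
      (∫ ω, g ω ^ (2 * s) ∂μ) ^ ((s - 1) / (2 * s - 1)) *
        (∫ ω, g ω ∂μ) ^ (1 - (s - 1) / (2 * s - 1)) := by
  rcases eq_or_lt_of_le hs with h1 | hs1
  · -- s = 1 : trivial
    rw [← h1]
    norm_num
  -- s > 1
  have hs0 : 0 < s := by linarith
  have h2s0 : (0:ℝ) < 2 * s := by linarith
  set θ : ℝ := (s - 1) / (2 * s - 1) with hθ
  have h2s1 : (0:ℝ) < 2 * s - 1 := by linarith
  have hθ0 : 0 < θ := div_pos (by linarith) h2s1
  have hθ1 : θ < 1 := by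
    rw [hθ, div_lt_one h2s1]; linarith
  -- reduce to the everywhere-nonnegative function `w = ‖g‖`
  set w : Ω → ℝ := fun ω => ‖g ω‖ with hw
  have hgw : g =ᵐ[μ] w := by
    filter_upwards [hg0] with ω h
    simp only [Pi.zero_apply] at h
    show g ω = ‖g ω‖
    rw [Real.norm_of_nonneg h]
  have hwm : AEStronglyMeasurable w μ := hgm.norm
  have hw0 : ∀ ω, 0 ≤ w ω := fun ω => norm_nonneg _
  have hint_s : ∫ ω, g ω ^ s ∂μ = ∫ ω, w ω ^ s ∂μ :=
    integral_congr_ae (hgw.mono fun ω h => by simp only [h])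
  have hint_2s : ∫ ω, g ω ^ (2 * s) ∂μ = ∫ ω, w ω ^ (2 * s) ∂μ :=
    integral_congr_ae (hgw.mono fun ω h => by simp only [h])
  have hint_1 : ∫ ω, g ω ∂μ = ∫ ω, w ω ∂μ := integral_congr_ae hgw
  rw [hint_s, hint_2s, hint_1]
  have hw1 : Integrable w μ := hg1.norm
  have hw2 : Integrable (fun ω => w ω ^ (2 * s)) μ :=
    hg2.congr (hgw.mono fun ω h => by simp only [h])
  -- MemLp facts
  have hP0 : ENNReal.ofReal (2 * s) ≠ 0 := by
    simp [ENNReal.ofReal_eq_zero, not_le, h2s0, hs0]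
  have hPt : ENNReal.ofReal (2 * s) ≠ ⊤ := ENNReal.ofReal_ne_top
  have hmem2s : MemLp w (ENNReal.ofReal (2 * s)) μ := by
    rw [← memLp_norm_rpow_iff (q := ENNReal.ofReal (2 * s)) hwm hP0 hPt]
    rw [ENNReal.div_self hP0 hPt, memLp_one_iff_integrable]
    refine hw2.congr ?_
    filter_upwards with ω
    rw [ENNReal.toReal_ofReal h2s0.le, Real.norm_of_nonneg (hw0 ω)]
  have hmem1 : MemLp w 1 μ := memLp_one_iff_integrable.mpr hw1
  -- Hölder
  have hpq : Real.HolderConjugate (1 / θ) (1 / (1 - θ)) := by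
    simpa only [one_div] using Real.HolderConjugate.inv_inv hθ0 (by linarith) (by ring)
  have hf1 : MemLp (fun ω => w ω ^ (2 * s * θ)) (ENNReal.ofReal (1 / θ)) μ := by
    have h := hmem2s.norm_rpow_div (ENNReal.ofReal (2 * s * θ))
    have he : ENNReal.ofReal (2 * s) / ENNReal.ofReal (2 * s * θ) = ENNReal.ofReal (1 / θ) := by
      rw [← ENNReal.ofReal_div_of_pos (by positivity)]
      congr 1
      field_simp
    rw [he] at h
    refine MemLp.ae_eq ?_ h
    filter_upwards with ω
    beta_reduce
    rw [ENNReal.toReal_ofReal (by positivity), Real.norm_of_nonneg (hw0 ω)]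
  have hf2 : MemLp (fun ω => w ω ^ (1 - θ)) (ENNReal.ofReal (1 / (1 - θ))) μ := by
    have h := hmem1.norm_rpow_div (ENNReal.ofReal (1 - θ))
    have he : (1 : ENNReal) / ENNReal.ofReal (1 - θ) = ENNReal.ofReal (1 / (1 - θ)) := by
      rw [← ENNReal.ofReal_one, ← ENNReal.ofReal_div_of_pos (by linarith)]
    rw [he] at h
    refine MemLp.ae_eq ?_ h
    filter_upwards with ω
    beta_reduce
    rw [ENNReal.toReal_ofReal (by linarith), Real.norm_of_nonneg (hw0 ω)]
  have hhold := integral_mul_norm_le_Lp_mul_Lq hpq hf1 hf2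
  -- rewrite the three integrals
  have e1 : ∫ ω, ‖w ω ^ (2 * s * θ)‖ * ‖w ω ^ (1 - θ)‖ ∂μ = ∫ ω, w ω ^ s ∂μ := by
    refine integral_congr_ae (Eventually.of_forall fun ω => ?_)
    beta_reduce
    rw [Real.norm_of_nonneg (Real.rpow_nonneg (hw0 ω) _),
      Real.norm_of_nonneg (Real.rpow_nonneg (hw0 ω) _),
      ← Real.rpow_add_of_nonneg (hw0 ω) (by positivity) (by linarith)]
    congr 1
    rw [hθ]
    field_simp
    ring
  have e2 : ∫ ω, ‖w ω ^ (2 * s * θ)‖ ^ (1 / θ) ∂μ = ∫ ω, w ω ^ (2 * s) ∂μ := by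
    refine integral_congr_ae (Eventually.of_forall fun ω => ?_)
    beta_reduce
    rw [Real.norm_of_nonneg (Real.rpow_nonneg (hw0 ω) _), ← Real.rpow_mul (hw0 ω)]
    congr 1
    field_simp
  have e3 : ∫ ω, ‖w ω ^ (1 - θ)‖ ^ (1 / (1 - θ)) ∂μ = ∫ ω, w ω ∂μ := by
    refine integral_congr_ae (Eventually.of_forall fun ω => ?_)
    beta_reduce
    rw [Real.norm_of_nonneg (Real.rpow_nonneg (hw0 ω) _), ← Real.rpow_mul (hw0 ω)]
    rw [mul_one_div, div_self (by linarith : 1 - θ ≠ 0)]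
    rw [Real.rpow_one]
  rw [e1, e2, e3] at hhold
  have e4 : 1 / (1 / θ) = θ := by field_simp
  have e5 : 1 / (1 / (1 - θ)) = 1 - θ := by
    field_simp
  rw [e4, e5] at hhold
  exact hhold


lemma final_arith {s θ a e1 e2 e3 n a1 a2 c I1 I2 : ℝ}
    (hθ0 : 0 ≤ θ) (hθ1 : θ < 1) (hs : 0 < s)
    (hsum : 2 * θ + (1 - θ) / s = 1)
    (hexp : a = θ * e1 + θ * e2 + ((1 - θ) / s) * e3)
    (hn : 1 ≤ n)
    (ha1 : 0 ≤ a1) (ha2 : 0 ≤ a2) (hc : 0 ≤ c)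
    (hI1 : I1 ≤ a1 ^ θ * c ^ (1 - θ)) (hI2 : I2 ≤ a2 ^ θ * c ^ (1 - θ))
    (hI1' : 0 ≤ I1) (hI2' : 0 ≤ I2) :
    n ^ a * I1 * I2 ≤ max (n ^ e1 * a1) (max (n ^ e2 * a2) (n ^ e3 * c ^ (2 * s))) := by
  have hn0 : (0:ℝ) < n := by linarith
  have h2s0 : (0:ℝ) < 2 * s := by linarith
  set M := max (n ^ e1 * a1) (max (n ^ e2 * a2) (n ^ e3 * c ^ (2 * s))) with hM
  have hM0 : 0 ≤ M :=
    le_max_of_le_right (le_max_of_le_right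
      (mul_nonneg (Real.rpow_nonneg hn0.le _) (Real.rpow_nonneg hc _)))
  have hAle : n ^ e1 * a1 ≤ M := le_max_left _ _
  have hBle : n ^ e2 * a2 ≤ M := (le_max_left _ _).trans (le_max_right _ _)
  have hCle : n ^ e3 * c ^ (2 * s) ≤ M := (le_max_right _ _).trans (le_max_right _ _)
  rcases eq_or_lt_of_le hM0 with hM0' | hMpos
  · -- M = 0 : then c = 0, so I1 = 0 and the LHS vanishes
    have hc0 : c = 0 := by
      by_contra hcne
      have hcpos : 0 < c := lt_of_le_of_ne hc (Ne.symm hcne)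
      have h1 : 0 < c ^ (2 * s) := Real.rpow_pos_of_pos hcpos _
      have h2 : 0 < n ^ e3 := Real.rpow_pos_of_pos hn0 _
      nlinarith [hCle]
    have hI10 : I1 = 0 := by
      have : I1 ≤ 0 := by
        rw [hc0, Real.zero_rpow (by linarith : 1 - θ ≠ 0), mul_zero] at hI1
        exact hI1
      linarith
    rw [hI10, mul_zero, zero_mul]
    exact hM0
  · -- M > 0
    have h1 : a1 ≤ M * n ^ (-e1) := by
      rw [Real.rpow_neg hn0.le, ← div_eq_mul_inv, le_div_iff₀ (Real.rpow_pos_of_pos hn0 e1)]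
      calc a1 * n ^ e1 = n ^ e1 * a1 := mul_comm _ _
        _ ≤ M := hAle
    have h2 : a2 ≤ M * n ^ (-e2) := by
      rw [Real.rpow_neg hn0.le, ← div_eq_mul_inv, le_div_iff₀ (Real.rpow_pos_of_pos hn0 e2)]
      calc a2 * n ^ e2 = n ^ e2 * a2 := mul_comm _ _
        _ ≤ M := hBle
    have h3 : c ^ (2 * s) ≤ M * n ^ (-e3) := by
      rw [Real.rpow_neg hn0.le, ← div_eq_mul_inv, le_div_iff₀ (Real.rpow_pos_of_pos hn0 e3)]
      calc c ^ (2 * s) * n ^ e3 = n ^ e3 * c ^ (2 * s) := mul_comm _ _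
        _ ≤ M := hCle
    have hMn3 : (0:ℝ) ≤ M * n ^ (-e3) := mul_nonneg hM0 (Real.rpow_nonneg hn0.le _)
    have h4 : c ≤ (M * n ^ (-e3)) ^ (1 / (2 * s)) := by
      have hstep := Real.rpow_le_rpow (Real.rpow_nonneg hc _) h3
        (by positivity : (0:ℝ) ≤ 1 / (2 * s))
      have hcc : (c ^ (2 * s)) ^ (1 / (2 * s)) = c := by
        rw [← Real.rpow_mul hc, mul_one_div, div_self (ne_of_gt h2s0), Real.rpow_one]
      rwa [hcc] at hstep
    have hna : (0:ℝ) ≤ n ^ a := Real.rpow_nonneg hn0.le _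
    have hb1 : (0:ℝ) ≤ a1 ^ θ * c ^ (1 - θ) :=
      mul_nonneg (Real.rpow_nonneg ha1 _) (Real.rpow_nonneg hc _)
    have hb2 : (0:ℝ) ≤ a2 ^ θ * c ^ (1 - θ) :=
      mul_nonneg (Real.rpow_nonneg ha2 _) (Real.rpow_nonneg hc _)
    have hsplit : ∀ u v : ℝ, (M * n ^ u) ^ v = M ^ v * n ^ (u * v) := by
      intro u v
      rw [Real.mul_rpow hM0 (Real.rpow_nonneg hn0.le u), ← Real.rpow_mul hn0.le]
    have hR1 : a1 ^ θ * c ^ (1 - θ) ≤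
        M ^ θ * n ^ (-e1 * θ) * (M ^ (1 / (2 * s) * (1 - θ)) * n ^ (-e3 * (1 / (2 * s) * (1 - θ)))) := by
      calc a1 ^ θ * c ^ (1 - θ)
          ≤ (M * n ^ (-e1)) ^ θ * ((M * n ^ (-e3)) ^ (1 / (2 * s))) ^ (1 - θ) :=
            mul_le_mul (Real.rpow_le_rpow ha1 h1 hθ0) (Real.rpow_le_rpow hc h4 (by linarith))
              (Real.rpow_nonneg hc _) (Real.rpow_nonneg (mul_nonneg hM0 (Real.rpow_nonneg hn0.le _)) _)
        _ = M ^ θ * n ^ (-e1 * θ) * (M ^ (1 / (2 * s) * (1 - θ)) * n ^ (-e3 * (1 / (2 * s) * (1 - θ)))) := by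
            rw [← Real.rpow_mul hMn3, hsplit, hsplit]
    have hR2 : a2 ^ θ * c ^ (1 - θ) ≤
        M ^ θ * n ^ (-e2 * θ) * (M ^ (1 / (2 * s) * (1 - θ)) * n ^ (-e3 * (1 / (2 * s) * (1 - θ)))) := by
      calc a2 ^ θ * c ^ (1 - θ)
          ≤ (M * n ^ (-e2)) ^ θ * ((M * n ^ (-e3)) ^ (1 / (2 * s))) ^ (1 - θ) :=
            mul_le_mul (Real.rpow_le_rpow ha2 h2 hθ0) (Real.rpow_le_rpow hc h4 (by linarith))
              (Real.rpow_nonneg hc _) (Real.rpow_nonneg (mul_nonneg hM0 (Real.rpow_nonneg hn0.le _)) _)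
        _ = M ^ θ * n ^ (-e2 * θ) * (M ^ (1 / (2 * s) * (1 - θ)) * n ^ (-e3 * (1 / (2 * s) * (1 - θ)))) := by
            rw [← Real.rpow_mul hMn3, hsplit, hsplit]
    have h2γ : 1 / (2 * s) * (1 - θ) + 1 / (2 * s) * (1 - θ) = (1 - θ) / s := by
      field_simp
      ring
    have hMe : θ + 1 / (2 * s) * (1 - θ) + (θ + 1 / (2 * s) * (1 - θ)) = 1 := by
      linarith [h2γ, hsum]
    have hne' : a + (-e1 * θ + -e3 * (1 / (2 * s) * (1 - θ)) + (-e2 * θ + -e3 * (1 / (2 * s) * (1 - θ)))) = 0 := by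
      linear_combination hexp - e3 * h2γ
    calc n ^ a * I1 * I2
        ≤ n ^ a * (a1 ^ θ * c ^ (1 - θ)) * (a2 ^ θ * c ^ (1 - θ)) :=
          mul_le_mul (mul_le_mul le_rfl hI1 hI1' hna) hI2 hI2' (mul_nonneg hna hb1)
      _ ≤ n ^ a * (M ^ θ * n ^ (-e1 * θ) * (M ^ (1 / (2 * s) * (1 - θ)) * n ^ (-e3 * (1 / (2 * s) * (1 - θ)))))
            * (M ^ θ * n ^ (-e2 * θ) * (M ^ (1 / (2 * s) * (1 - θ)) * n ^ (-e3 * (1 / (2 * s) * (1 - θ))))) := by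
          refine mul_le_mul (mul_le_mul le_rfl hR1 hb1 hna) hR2 hb2 ?_
          exact mul_nonneg hna (mul_nonneg
            (mul_nonneg (Real.rpow_nonneg hM0 _) (Real.rpow_nonneg hn0.le _))
            (mul_nonneg (Real.rpow_nonneg hM0 _) (Real.rpow_nonneg hn0.le _)))
      _ = M ^ (θ + 1 / (2 * s) * (1 - θ) + (θ + 1 / (2 * s) * (1 - θ)))
            * n ^ (a + (-e1 * θ + -e3 * (1 / (2 * s) * (1 - θ)) + (-e2 * θ + -e3 * (1 / (2 * s) * (1 - θ))))) := by
          rw [Real.rpow_add hMpos, Real.rpow_add hMpos,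
            Real.rpow_add hn0, Real.rpow_add hn0, Real.rpow_add hn0, Real.rpow_add hn0]
          ring
      _ = M := by
          rw [hMe, hne', Real.rpow_one, Real.rpow_zero, mul_one]

/-- Inequality (7): a consequence of Lemma 2 for conditional moments of a
nonnegative symmetric kernel. -/
theorem ineq7_conditional_moment_products (s : ℝ) (m : ℕ) (hs : 1 ≤ s) (hm : 1 ≤ m) :
    ∃ B : ℝ, 0 < B ∧
      ∀ (Ω S : Type) (_ : MeasurableSpace Ω) (_ : MeasurableSpace S)
        (μ : Measure Ω) (_ : IsProbabilityMeasure μ)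
        (X : Fin m → Ω → S)
        (_ : ∀ i, Measurable (X i))
        (_ : iIndepFun X μ)
        (_ : ∀ i j, Measure.map (X i) μ = Measure.map (X j) μ)
        (Y : (Fin m → S) → ℝ) (_ : Measurable Y) (_ : ∀ x, 0 ≤ Y x)
        (_ : ∀ (π : Equiv.Perm (Fin m)) (x : Fin m → S), Y (x ∘ π) = Y x)
        (_ : Integrable (fun ω => (Y fun i => X i ω) ^ (2 * s)) μ)
        (k l : ℕ) (_ : k ≤ m) (_ : l ≤ m) (n : ℕ) (_ : 1 ≤ n),
        (n : ℝ) ^ ((k : ℝ) + l + s * (2 * (m : ℝ) - k - l)) *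
            (∫ ω, (condExp (sigmaOf X (fun i => (i : ℕ) < k)) μ
                (fun ω' => Y fun i => X i ω') ω) ^ s ∂μ) *
            (∫ ω, (condExp (sigmaOf X (fun i => (i : ℕ) < l)) μ
                (fun ω' => Y fun i => X i ω') ω) ^ s ∂μ)
          ≤ B * max ((n : ℝ) ^ ((k : ℝ) + 2 * s * ((m : ℝ) - k)) *
                ∫ ω, (condExp (sigmaOf X (fun i => (i : ℕ) < k)) μ
                    (fun ω' => Y fun i => X i ω') ω) ^ (2 * s) ∂μ)
              (max ((n : ℝ) ^ ((l : ℝ) + 2 * s * ((m : ℝ) - l)) *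
                  ∫ ω, (condExp (sigmaOf X (fun i => (i : ℕ) < l)) μ
                      (fun ω' => Y fun i => X i ω') ω) ^ (2 * s) ∂μ)
                ((n : ℝ) ^ (2 * s * (m : ℝ)) *
                  (∫ ω, (Y fun i => X i ω) ∂μ) ^ (2 * s))) := by
  refine ⟨1, one_pos, ?_⟩
  intro Ω S mΩ mS μ hμ X hXm hXind hXid Y hY hY0 hYsym hY2s k l hk hl n hn
  set f : Ω → ℝ := fun ω => Y fun i => X i ω with hfdef
  have hfm : Measurable f := hY.comp (measurable_pi_lambda _ fun i => hXm i)
  have hf0 : ∀ ω, 0 ≤ f ω := fun ω => hY0 _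
  have hf0ae : 0 ≤ᵐ[μ] f := Filter.Eventually.of_forall fun ω => hf0 ω
  have hs2 : (1:ℝ) < 2 * s := by linarith
  have h2s1 : (0:ℝ) < 2 * s - 1 := by linarith
  have hf_int : Integrable f μ := by
    refine Integrable.mono' ((integrable_const (1:ℝ)).add hY2s) hfm.aestronglyMeasurable ?_
    filter_upwards with ω
    rw [Real.norm_of_nonneg (hf0 ω)]
    simp only [Pi.add_apply]
    rcases le_or_gt (f ω) 1 with h | h
    · have h0 : (0:ℝ) ≤ f ω ^ (2 * s) := Real.rpow_nonneg (hf0 ω) _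
      linarith
    · have h2 : f ω ^ (1:ℝ) ≤ f ω ^ (2 * s) :=
        Real.rpow_le_rpow_of_exponent_le h.le (by linarith)
      rw [Real.rpow_one] at h2
      linarith
  set θ : ℝ := (s - 1) / (2 * s - 1) with hθdef
  have hθ0 : 0 ≤ θ := div_nonneg (by linarith) (by linarith)
  have hθ1 : θ < 1 := by
    rw [hθdef, div_lt_one h2s1]; linarith
  -- facts about the conditional expectations, for any index bound j
  have H : ∀ j : ℕ,
      (∫ ω, (condExp (sigmaOf X (fun i => (i : ℕ) < j)) μ f ω) ^ s ∂μ ≤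
        (∫ ω, (condExp (sigmaOf X (fun i => (i : ℕ) < j)) μ f ω) ^ (2 * s) ∂μ) ^ θ *
          (∫ ω, f ω ∂μ) ^ (1 - θ)) ∧
      0 ≤ ∫ ω, (condExp (sigmaOf X (fun i => (i : ℕ) < j)) μ f ω) ^ s ∂μ ∧
      0 ≤ ∫ ω, (condExp (sigmaOf X (fun i => (i : ℕ) < j)) μ f ω) ^ (2 * s) ∂μ := by
    intro j
    have hm' : sigmaOf X (fun i => (i : ℕ) < j) ≤ mΩ := by
      refine iSup_le fun i => iSup_le fun _ => ?_
      exact (hXm i).comap_le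
    set g := condExp (sigmaOf X (fun i => (i : ℕ) < j)) μ f with hgdef
    have hg0 : 0 ≤ᵐ[μ] g := condExp_nonneg hf0ae
    have hgint : Integrable g μ := integrable_condExp
    have hg2s : Integrable (fun ω => g ω ^ (2 * s)) μ :=
      condexp_rpow_integrable hm' hf0ae hf_int hs2 hY2s
    have hintg : ∫ ω, g ω ∂μ = ∫ ω, f ω ∂μ := integral_condExp hm' (μ := μ) (f := f)
    have hinterp := integral_rpow_interpolation
      (stronglyMeasurable_condExp.mono hm').aestronglyMeasurable hg0 hs hgint hg2s
    rw [hintg] at hinterp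
    refine ⟨hinterp, ?_, ?_⟩
    · refine integral_nonneg_of_ae ?_
      filter_upwards [hg0] with ω h
      exact Real.rpow_nonneg h _
    · refine integral_nonneg_of_ae ?_
      filter_upwards [hg0] with ω h
      exact Real.rpow_nonneg h _
  obtain ⟨hIk, hIk0, hAk0⟩ := H k
  obtain ⟨hIl, hIl0, hAl0⟩ := H l
  rw [one_mul]
  have hc0 : 0 ≤ ∫ ω, f ω ∂μ := integral_nonneg hf0
  have hn1 : (1:ℝ) ≤ (n:ℝ) := by exact_mod_cast hn
  have hs0 : (0:ℝ) < s := by linarith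
  refine final_arith (θ := θ) hθ0 hθ1 hs0 ?_ ?_ hn1 hAk0 hAl0 hc0 hIk hIl hIk0 hIl0
  · rw [hθdef]
    field_simp
    ring
  · rw [hθdef]
    have h2ne : 2 * s - 1 ≠ 0 := h2s1.ne'
    have ht : (2 * s - 1) * (2 * s - 1)⁻¹ = 1 := mul_inv_cancel₀ h2ne
    field_simp
    linear_combination (-(s - 1) * (2 * (m:ℝ) - k - l)) * ht
end

section
/- Let X_1,...,X_n be i.i.d. random variables with values in a measurable space S, 1 ≤ k ≤ m-1, p ≥ 1, and let Y : S^m → ℝ be a nonnegative symmetric function with E[Y(X_1,...,X_m)^p] < ∞. Then Σ_{k+1≤i_{k+1}<...<i_m≤n} E[(Σ_{1≤i_1<...<i_k≤i_{k+1}-1} E[Y(X_{i_1},...,X_{i_m}) | X_{i_{k+1}},...,X_{i_m}])^p] ≥ A(p,m) · n^{p·k + (m-k)} · E[(E[Y(X_1,...,X_m) | X_{k+1},...,X_m])^p] for some constant A(p,m) > 0 and all n ≥ 2m, say. -/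
open MeasureTheory ProbabilityTheory Finset

section AuxLemmas

variable {Ω S : Type} [MeasurableSpace Ω] [MeasurableSpace S]
variable {μ : Measure Ω} [IsProbabilityMeasure μ] {n : ℕ} {X : Fin n → Ω → S}

/-- The law of an injectively-indexed tuple of iid random variables is the product measure. -/
lemma map_tuple_eq_pi (hX : ∀ i, Measurable (X i))
    (hind : iIndepFun X μ)
    (hid : ∀ i j, Measure.map (X i) μ = Measure.map (X j) μ)
    (i₀ : Fin n) {j : ℕ} (e : Fin j → Fin n) (he : Function.Injective e) :
    Measure.map (fun ω l => X (e l) ω) μ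
      = Measure.pi (fun _ : Fin j => Measure.map (X i₀) μ) := by
  classical
  haveI : IsProbabilityMeasure (Measure.map (X i₀) μ) :=
    Measure.isProbabilityMeasure_map (hX i₀).aemeasurable
  refine (Measure.pi_eq fun s hs => ?_).symm
  rw [Measure.map_apply (measurable_pi_lambda _ fun l => hX (e l)) (MeasurableSet.univ_pi hs)]
  set sets : Fin n → Set S := fun i => ⋂ l ∈ Finset.univ.filter (fun l : Fin j => e l = i), s l
    with hsets
  have hsets_e : ∀ l : Fin j, sets (e l) = s l := by
    intro l
    simp [hsets, he.eq_iff]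
  have hpre : (fun ω l => X (e l) ω) ⁻¹' Set.pi Set.univ s
      = ⋂ i ∈ Finset.univ.image e, X i ⁻¹' sets i := by
    ext ω
    simp only [Set.mem_preimage, Set.mem_univ_pi, Set.mem_iInter, Finset.mem_image,
      Finset.mem_univ, true_and]
    constructor
    · rintro hω i ⟨l, rfl⟩
      rw [hsets_e l]; exact hω l
    · intro hω l
      have := hω (e l) ⟨l, rfl⟩
      rwa [hsets_e l] at this
  have hsetsmeas : ∀ i, i ∈ Finset.univ.image e → MeasurableSet (sets i) := by
    intro i _
    exact MeasurableSet.biInter (Finset.countable_toSet _) fun l _ => hs l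
  rw [hpre, hind.measure_inter_preimage_eq_mul _ hsetsmeas,
    Finset.prod_image (fun l _ l' _ hll' => he hll')]
  refine Finset.prod_congr rfl fun l _ => ?_
  rw [hsets_e l, ← Measure.map_apply (hX (e l)) (hs l), hid (e l) i₀]

/-- Conditional expectation of a function of two disjoint blocks of iid variables, given the
second block, is the integral over the first block. -/
lemma condexp_tuple (hX : ∀ i, Measurable (X i))
    (hind : iIndepFun X μ)
    (hid : ∀ i j, Measure.map (X i) μ = Measure.map (X j) μ)
    (i₀ : Fin n) {k r : ℕ} (g : Fin k → Fin n) (h : Fin r → Fin n)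
    (hg : Function.Injective g) (hh : Function.Injective h)
    (hdisj : ∀ a b, g a ≠ h b)
    (Φ : (Fin k → S) × (Fin r → S) → ℝ) (hΦ : Measurable Φ)
    (hint : Integrable (fun ω => Φ (fun a => X (g a) ω, fun b => X (h b) ω)) μ) :
    condExp (MeasurableSpace.comap (fun ω b => X (h b) ω) MeasurableSpace.pi) μ
        (fun ω => Φ (fun a => X (g a) ω, fun b => X (h b) ω))
      =ᵐ[μ] fun ω => ∫ u, Φ (u, fun b => X (h b) ω)
              ∂(Measure.pi fun _ : Fin k => Measure.map (X i₀) μ) := by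
  classical
  haveI : IsProbabilityMeasure (Measure.map (X i₀) μ) :=
    Measure.isProbabilityMeasure_map (hX i₀).aemeasurable
  set ν := Measure.map (X i₀) μ with hν
  set Λk := Measure.pi (fun _ : Fin k => ν) with hΛk
  set Λr := Measure.pi (fun _ : Fin r => ν) with hΛr
  set Wg : Ω → Fin k → S := fun ω a => X (g a) ω with hWgdef
  set Wh : Ω → Fin r → S := fun ω b => X (h b) ω with hWhdef
  have hWg : Measurable Wg := measurable_pi_lambda _ fun a => hX (g a)
  have hWh : Measurable Wh := measurable_pi_lambda _ fun b => hX (h b)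
  have hmapg : Measure.map Wg μ = Λk := map_tuple_eq_pi hX hind hid i₀ g hg
  have hmaph : Measure.map Wh μ = Λr := map_tuple_eq_pi hX hind hid i₀ h hh
  have hindep : IndepFun Wg Wh μ := by
    have hST : Disjoint (Finset.univ.image g) (Finset.univ.image h) := by
      simp only [Finset.disjoint_left, Finset.mem_image]
      rintro i ⟨a, -, rfl⟩ ⟨b, -, hb⟩
      exact hdisj a b hb.symm
    have hbase := hind.indepFun_finset _ _ hST hX
    have hφg : Measurable (fun v : ((i : {x // x ∈ Finset.univ.image g}) → S) =>
        fun a : Fin k => v ⟨g a, by simp⟩) :=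
      measurable_pi_lambda _ fun a => measurable_pi_apply _
    have hφh : Measurable (fun v : ((i : {x // x ∈ Finset.univ.image h}) → S) =>
        fun b : Fin r => v ⟨h b, by simp⟩) :=
      measurable_pi_lambda _ fun b => measurable_pi_apply _
    exact hbase.comp hφg hφh
  have hpairmeas : Measurable fun ω => (Wg ω, Wh ω) := hWg.prodMk hWh
  have hlawpair : Measure.map (fun ω => (Wg ω, Wh ω)) μ = Λk.prod Λr := by
    rw [(indepFun_iff_map_prod_eq_prod_map_map hWg.aemeasurable hWh.aemeasurable).1 hindep,
      hmapg, hmaph]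
  have hΦint : Integrable Φ (Λk.prod Λr) := by
    rw [← hlawpair]
    exact (integrable_map_measure hΦ.aestronglyMeasurable hpairmeas.aemeasurable).2 hint
  set F : (Fin r → S) → ℝ := fun t => ∫ u, Φ (u, t) ∂Λk with hF
  have hFsm : StronglyMeasurable F := hΦ.stronglyMeasurable.integral_prod_left'
  have hFint : Integrable F Λr := hΦint.integral_prod_right
  have hm : MeasurableSpace.comap Wh MeasurableSpace.pi ≤ ‹MeasurableSpace Ω› := hWh.comap_le
  haveI : SigmaFinite (μ.trim hm) := by infer_instance
  have hFWh_int : Integrable (fun ω => F (Wh ω)) μ :=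
    (integrable_map_measure hFsm.aestronglyMeasurable hWh.aemeasurable).1
      (by rw [hmaph]; exact hFint)
  refine (ae_eq_condExp_of_forall_setIntegral_eq hm hint
    (fun s _ _ => hFWh_int.integrableOn) (fun s hs _ => ?_) ?_).symm
  · obtain ⟨t, ht, rfl⟩ := hs
    have hset : Wh ⁻¹' t = (fun ω => (Wg ω, Wh ω)) ⁻¹' (Set.univ ×ˢ t) := by
      ext ω; simp
    have hprodres : Λk.prod (Λr.restrict t) = (Λk.prod Λr).restrict (Set.univ ×ˢ t) := by
      rw [← Measure.prod_restrict, Measure.restrict_univ]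
    have hres : Integrable Φ (Λk.prod (Λr.restrict t)) := by
      rw [hprodres]; exact hΦint.integrableOn
    calc ∫ x in Wh ⁻¹' t, F (Wh x) ∂μ
        = ∫ y in t, F y ∂(Measure.map Wh μ) :=
          (setIntegral_map ht hFsm.aestronglyMeasurable hWh.aemeasurable).symm
      _ = ∫ y in t, F y ∂Λr := by rw [hmaph]
      _ = ∫ z in Set.univ ×ˢ t, Φ z ∂(Λk.prod Λr) := by
          rw [show (∫ z in Set.univ ×ˢ t, Φ z ∂(Λk.prod Λr))
              = ∫ z, Φ z ∂(Λk.prod (Λr.restrict t)) from by rw [hprodres],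
            integral_prod_symm _ hres]
      _ = ∫ z in Set.univ ×ˢ t, Φ z ∂(Measure.map (fun ω => (Wg ω, Wh ω)) μ) := by
          rw [hlawpair]
      _ = ∫ x in (fun ω => (Wg ω, Wh ω)) ⁻¹' (Set.univ ×ˢ t), Φ (Wg x, Wh x) ∂μ :=
          setIntegral_map (MeasurableSet.univ.prod ht) hΦ.aestronglyMeasurable
            hpairmeas.aemeasurable
      _ = ∫ x in Wh ⁻¹' t, Φ (Wg x, Wh x) ∂μ := by rw [hset]
  · refine StronglyMeasurable.aestronglyMeasurable ?_
    exact hFsm.comp_measurable (Measurable.of_comap_le le_rfl)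

end AuxLemmas

section AuxSigma

variable {Ω S : Type} [MeasurableSpace S] {n : ℕ} {X : Fin n → Ω → S}

lemma sigmaOf_eq_comap {r : ℕ} (h : Fin r → Fin n) (P : Fin n → Prop)
    (hP : ∀ i, P i ↔ ∃ j, h j = i) :
    sigmaOf X P = MeasurableSpace.comap (fun ω j => X (h j) ω) MeasurableSpace.pi := by
  have hpi : (MeasurableSpace.pi : MeasurableSpace (Fin r → S)) =
      ⨆ j : Fin r, MeasurableSpace.comap (fun f => f j) inferInstance := rfl
  rw [hpi, MeasurableSpace.comap_iSup]
  simp_rw [MeasurableSpace.comap_comp]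
  unfold sigmaOf
  apply le_antisymm
  · refine iSup_le fun i => iSup_le fun hPi => ?_
    obtain ⟨j, rfl⟩ := (hP i).1 hPi
    exact le_iSup (fun j => MeasurableSpace.comap
      ((fun f : Fin r → S => f j) ∘ fun ω j' => X (h j') ω) inferInstance) j
  · refine iSup_le fun j => ?_
    have heq : MeasurableSpace.comap ((fun f : Fin r → S => f j) ∘ fun ω j' => X (h j') ω)
        inferInstance = MeasurableSpace.comap (X (h j)) inferInstance := rfl
    rw [heq]
    exact le_iSup₂ (f := fun i (_ : P i) => MeasurableSpace.comap (X i) inferInstance)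
      (h j) ((hP (h j)).2 ⟨j, rfl⟩)

end AuxSigma

set_option maxHeartbeats 2000000 in
/-- The lower-bound step (for conditional sums) in the proof of Theorem 1. -/
theorem lower_bound_conditional_sums
    (p : ℝ) (m k : ℕ) (hp : 1 ≤ p) (hk : 1 ≤ k) (hkm : k ≤ m - 1) (hm : 1 ≤ m) :
    ∃ A : ℝ, 0 < A ∧
      ∀ (Ω S : Type) (_ : MeasurableSpace Ω) (_ : MeasurableSpace S)
        (μ : Measure Ω) (_ : IsProbabilityMeasure μ)
        (n : ℕ) (hn : 2 * m ≤ n) (X : Fin n → Ω → S)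
        (_ : ∀ i, Measurable (X i))
        (_ : iIndepFun X μ)
        (_ : ∀ i j, Measure.map (X i) μ = Measure.map (X j) μ)
        (Y : (Fin m → S) → ℝ) (_ : Measurable Y) (_ : ∀ x, 0 ≤ Y x)
        (_ : ∀ (π : Equiv.Perm (Fin m)) (x : Fin m → S), Y (x ∘ π) = Y x)
        (_ : Integrable (fun ω => (Y fun i => X (Fin.castLE (by omega : m ≤ n) i) ω) ^ p) μ),
        A * (n : ℝ) ^ (p * k + ((m : ℝ) - k)) *
            ∫ ω, (condExp (sigmaOf X (fun i => k ≤ (i : ℕ) ∧ (i : ℕ) < m)) μ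
                (fun ω' => Y fun i => X (Fin.castLE (by omega : m ≤ n) i) ω') ω) ^ p ∂μ
          ≤ ∑ h ∈ Finset.univ.filter (fun h : Fin (m - k) → Fin n =>
                (∀ a b, a < b → h a < h b) ∧ k ≤ (h ⟨0, by omega⟩ : ℕ)),
              ∫ ω, (∑ g ∈ Finset.univ.filter (fun g : Fin k → Fin n =>
                    (∀ a b, a < b → g a < g b) ∧ ∀ a, g a < h ⟨0, by omega⟩),
                  condExp (sigmaOf X (fun i => ∃ j, h j = i)) μ
                    (fun ω' => Y fun jm =>
                      X (Fin.append g h (Fin.cast (by omega : m = k + (m - k)) jm)) ω') ω) ^ p ∂μ := by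
  classical
  have hmR : (1:ℝ) ≤ m := by exact_mod_cast hm
  have hm4 : (0:ℝ) < 4 * m := by linarith
  refine ⟨((4 * m : ℝ))⁻¹ ^ (p * k) * ((4 * m : ℝ))⁻¹ ^ (m - k),
    mul_pos (Real.rpow_pos_of_pos (inv_pos.2 hm4) _) (pow_pos (inv_pos.2 hm4) _), ?_⟩
  intro Ω S mΩ mS μ hμ n hn X hX hind hid Y hY hY0 hsym hint
  haveI := hμ
  have hmn : m ≤ n := by omega
  set ν := Measure.map (X ⟨0, by omega⟩) μ with hν
  haveI : IsProbabilityMeasure ν := Measure.isProbabilityMeasure_map (hX _).aemeasurable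
  set Λk := Measure.pi (fun _ : Fin k => ν) with hΛk
  set Λr := Measure.pi (fun _ : Fin (m-k) => ν) with hΛr
  set Λm := Measure.pi (fun _ : Fin m => ν) with hΛm
  set Φ : (Fin k → S) × (Fin (m-k) → S) → ℝ :=
    fun ut => Y (fun jm => Fin.append ut.1 ut.2 (Fin.cast (by omega : m = k + (m - k)) jm))
    with hΦdef
  have hΦmeas : Measurable Φ := by
    apply hY.comp
    apply measurable_pi_lambda
    intro jm
    refine Fin.addCases (motive := fun i => Measurable fun ut : (Fin k → S) × (Fin (m-k) → S) =>
      Fin.append ut.1 ut.2 i) (fun a => ?_) (fun b => ?_) (Fin.cast (by omega) jm)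
    · simp only [Fin.append_left]
      exact (measurable_pi_apply a).comp measurable_fst
    · simp only [Fin.append_right]
      exact (measurable_pi_apply b).comp measurable_snd
  have hΦ0 : ∀ z, 0 ≤ Φ z := fun z => hY0 _
  set F : (Fin (m-k) → S) → ℝ := fun t => ∫ u, Φ (u, t) ∂Λk with hFdef
  have hF0 : ∀ t, 0 ≤ F t := fun t => integral_nonneg fun u => hΦ0 _
  have hFsm : StronglyMeasurable F := hΦmeas.stronglyMeasurable.integral_prod_left'
  have hFpmeas : Measurable (fun t => F t ^ p) :=
    (Real.continuous_rpow_const (by linarith)).measurable.comp hFsm.measurable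
  set D := ∫ t, F t ^ p ∂Λr with hDdef
  have hD0 : 0 ≤ D := integral_nonneg fun t => Real.rpow_nonneg (hF0 t) p
  have happend : ∀ (g : Fin k → Fin n) (h : Fin (m-k) → Fin n) (ω : Ω) (i : Fin (k + (m-k))),
      X (Fin.append g h i) ω = Fin.append (fun a => X (g a) ω) (fun b => X (h b) ω) i := by
    intro g h ω i
    refine Fin.addCases (motive := fun i => X (Fin.append g h i) ω
      = Fin.append (fun a => X (g a) ω) (fun b => X (h b) ω) i) (fun a => ?_) (fun b => ?_) i
    · simp [Fin.append_left]
    · simp [Fin.append_right]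
  have hfunrw : ∀ (g : Fin k → Fin n) (h : Fin (m-k) → Fin n),
      (fun ω => Y fun jm => X (Fin.append g h (Fin.cast (by omega : m = k + (m - k)) jm)) ω)
      = fun ω => Φ (fun a => X (g a) ω, fun b => X (h b) ω) := by
    intro g h
    funext ω
    simp only [hΦdef]
    congr 1
    funext jm
    exact happend g h ω _
  have happinj : ∀ (g : Fin k → Fin n) (h : Fin (m-k) → Fin n), Function.Injective g →
      Function.Injective h → (∀ a b, g a ≠ h b) →
      Function.Injective
        (fun jm : Fin m => Fin.append g h (Fin.cast (by omega : m = k + (m-k)) jm)) := by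
    intro g h hg hh hdisj
    have happ : ∀ x y : Fin (k + (m-k)), Fin.append g h x = Fin.append g h y → x = y := by
      intro x y
      refine Fin.addCases (motive := fun x => Fin.append g h x = Fin.append g h y → x = y)
        (fun a => ?_) (fun b => ?_) x
      · refine Fin.addCases (motive := fun y => Fin.append g h (Fin.castAdd _ a) = Fin.append g h y
          → Fin.castAdd _ a = y) (fun a' => ?_) (fun b' => ?_) y <;>
          simp only [Fin.append_left, Fin.append_right] <;> intro hxy
        · exact congrArg _ (hg hxy)
        · exact absurd hxy (hdisj _ _)
      · refine Fin.addCases (motive := fun y => Fin.append g h (Fin.natAdd _ b) = Fin.append g h y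
          → Fin.natAdd _ b = y) (fun a' => ?_) (fun b' => ?_) y <;>
          simp only [Fin.append_left, Fin.append_right] <;> intro hxy
        · exact absurd hxy.symm (hdisj _ _)
        · exact congrArg _ (hh hxy)
    intro x y hxy
    exact Fin.cast_injective _ (happ _ _ hxy)
  have hlaw : ∀ {j : ℕ} (e : Fin j → Fin n), Function.Injective e →
      Measure.map (fun ω l => X (e l) ω) μ = Measure.pi (fun _ : Fin j => ν) :=
    fun e he => map_tuple_eq_pi hX hind hid _ e he
  have hYpInt : Integrable (fun x : Fin m → S => Y x ^ p) Λm := by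
    have hW : Measurable (fun ω l => X (Fin.castLE hmn l) ω) :=
      measurable_pi_lambda _ fun l => hX _
    have hYp : Measurable (fun x : Fin m → S => Y x ^ p) :=
      (Real.continuous_rpow_const (by linarith)).measurable.comp hY
    have h2 := (integrable_map_measure hYp.aestronglyMeasurable hW.aemeasurable).2 hint
    rwa [hlaw (Fin.castLE hmn) (Fin.castLE_injective hmn)] at h2
  have hYInt : Integrable Y Λm := by
    have h1 : Integrable (fun x : Fin m → S => 1 + Y x ^ p) Λm := (integrable_const 1).add hYpInt
    refine h1.mono' hY.aestronglyMeasurable (Filter.Eventually.of_forall fun x => ?_)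
    rw [Real.norm_eq_abs, abs_of_nonneg (hY0 x)]
    rcases le_total (Y x) 1 with hx | hx
    · have := Real.rpow_nonneg (hY0 x) p; linarith
    · have h2 : Y x ^ (1:ℝ) ≤ Y x ^ p := Real.rpow_le_rpow_of_exponent_le hx hp
      rw [Real.rpow_one] at h2; linarith
  have hYWeInt : ∀ (e : Fin m → Fin n), Function.Injective e →
      Integrable (fun ω => Y (fun l => X (e l) ω)) μ := by
    intro e he
    have hW : Measurable fun ω l => X (e l) ω := measurable_pi_lambda _ fun l => hX _
    exact (integrable_map_measure hY.aestronglyMeasurable hW.aemeasurable).1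
      (by rw [hlaw e he]; exact hYInt)
  have key : ∀ (g : Fin k → Fin n) (h : Fin (m-k) → Fin n), Function.Injective g →
      Function.Injective h → (∀ a b, g a ≠ h b) →
      condExp (MeasurableSpace.comap (fun ω b => X (h b) ω) MeasurableSpace.pi) μ
          (fun ω' => Y fun jm => X (Fin.append g h (Fin.cast (by omega : m = k + (m - k)) jm)) ω')
        =ᵐ[μ] fun ω => F (fun b => X (h b) ω) := by
    intro g h hg hh hdisj
    have hint' : Integrable
        (fun ω => Y fun jm => X (Fin.append g h (Fin.cast (by omega : m = k + (m - k)) jm)) ω) μ :=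
      hYWeInt (fun jm => Fin.append g h (Fin.cast (by omega) jm)) (happinj g h hg hh hdisj)
    rw [hfunrw g h] at hint' ⊢
    exact condexp_tuple hX hind hid ⟨0, by omega⟩ g h hg hh hdisj Φ hΦmeas hint'
  -- the canonical configuration
  set h0 : Fin (m-k) → Fin n := fun j => ⟨k + (j:ℕ), by have := j.isLt; omega⟩ with hh0def
  set g0 : Fin k → Fin n := fun a => ⟨(a:ℕ), by have := a.isLt; omega⟩ with hg0def
  have hσ0 : sigmaOf X (fun i => k ≤ (i:ℕ) ∧ (i:ℕ) < m)
      = MeasurableSpace.comap (fun ω b => X (h0 b) ω) MeasurableSpace.pi := by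
    refine sigmaOf_eq_comap h0 _ fun i => ?_
    constructor
    · rintro ⟨h1, h2⟩
      refine ⟨⟨(i:ℕ) - k, by omega⟩, ?_⟩
      exact Fin.ext (show k + ((i:ℕ) - k) = (i:ℕ) from by omega)
    · rintro ⟨j, rfl⟩
      have hval : ((h0 j : Fin n) : ℕ) = k + (j:ℕ) := rfl
      have := j.isLt
      omega
  have hg0inj : Function.Injective g0 := by
    intro a a' haa'
    have := congrArg Fin.val haa'
    simp only [hg0def] at this
    exact Fin.ext this
  have hh0inj : Function.Injective h0 := by
    intro a a' haa'
    have := congrArg Fin.val haa'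
    simp only [hh0def] at this
    exact Fin.ext (by omega)
  have hdisj0 : ∀ a b, g0 a ≠ h0 b := by
    intro a b hab
    have h1 := congrArg Fin.val hab
    have := a.isLt
    simp only [hg0def, hh0def] at h1
    omega
  have hcast0 : (fun ω' => Y fun i => X (Fin.castLE hmn i) ω')
      = fun ω' => Y fun jm => X (Fin.append g0 h0 (Fin.cast (by omega : m = k + (m-k)) jm)) ω' := by
    have happ0 : ∀ iz : Fin (k + (m-k)), ((Fin.append g0 h0 iz : Fin n) : ℕ) = (iz : ℕ) := by
      intro iz
      refine Fin.addCases (motive := fun iz => ((Fin.append g0 h0 iz : Fin n):ℕ) = (iz:ℕ))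
        (fun a => ?_) (fun b => ?_) iz
      · simp [hg0def, Fin.append_left]
      · simp [hh0def, Fin.append_right]
    funext ω'
    congr 1
    funext i
    congr 1
    exact Fin.ext (by rw [happ0]; simp)
  have hLHS : (∫ ω, (condExp (sigmaOf X fun i => k ≤ (i:ℕ) ∧ (i:ℕ) < m) μ
      (fun ω' => Y fun i => X (Fin.castLE hmn i) ω') ω) ^ p ∂μ) = D := by
    have hcc : condExp (sigmaOf X fun i => k ≤ (i:ℕ) ∧ (i:ℕ) < m) μ
        (fun ω' => Y fun i => X (Fin.castLE hmn i) ω')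
        =ᵐ[μ] fun ω => F fun b => X (h0 b) ω := by
      rw [hσ0, hcast0]; exact key g0 h0 hg0inj hh0inj hdisj0
    have h1 : (fun ω => (condExp (sigmaOf X fun i => k ≤ (i:ℕ) ∧ (i:ℕ) < m) μ
        (fun ω' => Y fun i => X (Fin.castLE hmn i) ω') ω) ^ p)
        =ᵐ[μ] fun ω => (F fun b => X (h0 b) ω) ^ p := by
      filter_upwards [hcc] with ω hω
      rw [hω]
    rw [integral_congr_ae h1, hDdef, hΛr, ← hlaw h0 hh0inj,
      integral_map (measurable_pi_lambda _ fun b => hX _).aemeasurable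
        hFpmeas.aestronglyMeasurable]
  -- value of each term of the outer sum
  have hterm : ∀ h : Fin (m-k) → Fin n, (∀ a b : Fin (m-k), a < b → h a < h b) →
      k ≤ ((h ⟨0, by omega⟩ : Fin n) : ℕ) →
      (∫ ω, (∑ g ∈ Finset.univ.filter (fun g : Fin k → Fin n =>
          (∀ a b, a < b → g a < g b) ∧ ∀ a, g a < h ⟨0, by omega⟩),
          condExp (sigmaOf X fun i => ∃ j, h j = i) μ
            (fun ω' => Y fun jm =>
              X (Fin.append g h (Fin.cast (by omega : m = k + (m-k)) jm)) ω') ω) ^ p ∂μ)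
      = (((Finset.univ.filter (fun g : Fin k → Fin n =>
          (∀ a b, a < b → g a < g b) ∧ ∀ a, g a < h ⟨0, by omega⟩)).card : ℝ) ^ p) * D := by
    intro h hmono hk0
    have hhsm : StrictMono h := fun a b hab => hmono a b hab
    have hhinj : Function.Injective h := hhsm.injective
    have hσ : sigmaOf X (fun i => ∃ j, h j = i)
        = MeasurableSpace.comap (fun ω b => X (h b) ω) MeasurableSpace.pi :=
      sigmaOf_eq_comap h _ fun i => Iff.rfl
    rw [hσ]
    set filt := Finset.univ.filter (fun g : Fin k → Fin n =>
      (∀ a b, a < b → g a < g b) ∧ ∀ a, g a < h ⟨0, by omega⟩) with hfilt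
    have hae : ∀ᵐ ω ∂μ, ∀ g ∈ filt,
        condExp (MeasurableSpace.comap (fun ω b => X (h b) ω) MeasurableSpace.pi) μ
          (fun ω' => Y fun jm =>
            X (Fin.append g h (Fin.cast (by omega : m = k + (m-k)) jm)) ω') ω
        = F (fun b => X (h b) ω) := by
      rw [Filter.eventually_all_finset]
      intro g hg
      rw [hfilt, Finset.mem_filter] at hg
      obtain ⟨-, hgmono, hglt⟩ := hg
      have hgsm : StrictMono g := fun a b hab => hgmono a b hab
      have hginj : Function.Injective g := hgsm.injective
      have hdisj : ∀ a b, g a ≠ h b := by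
        intro a b
        have h0b : h ⟨0, by omega⟩ ≤ h b := hhsm.monotone (by simp [Fin.le_def])
        exact ne_of_lt (lt_of_lt_of_le (hglt a) h0b)
      exact key g h hginj hhinj hdisj
    have hsum : (fun ω => (∑ g ∈ filt,
        condExp (MeasurableSpace.comap (fun ω b => X (h b) ω) MeasurableSpace.pi) μ
          (fun ω' => Y fun jm =>
            X (Fin.append g h (Fin.cast (by omega : m = k + (m-k)) jm)) ω') ω) ^ p)
        =ᵐ[μ] fun ω => ((filt.card : ℝ) * F (fun b => X (h b) ω)) ^ p := by
      filter_upwards [hae] with ω hω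
      rw [Finset.sum_congr rfl (fun g hg => hω g hg), Finset.sum_const, nsmul_eq_mul]
    rw [integral_congr_ae hsum]
    have hmul : ∀ ω : Ω, ((filt.card:ℝ) * F (fun b => X (h b) ω))^p
        = (filt.card:ℝ)^p * F (fun b => X (h b) ω)^p :=
      fun ω => Real.mul_rpow (Nat.cast_nonneg _) (hF0 _)
    simp_rw [hmul]
    rw [integral_const_mul]
    congr 1
    rw [hDdef, hΛr, ← hlaw h hhinj,
      integral_map (measurable_pi_lambda _ fun b => hX _).aemeasurable
        hFpmeas.aestronglyMeasurable]
  -- arithmetic: nat division lower bound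
  have hdivb : ∀ c : ℕ, 1 ≤ c → c ≤ m → (n:ℝ)/(4*m) ≤ ((n / 2 / c : ℕ) : ℝ) := by
    intro c hc1 hcm
    rw [Nat.div_div_eq_div_mul]
    have hc0 : 0 < 2*c := by omega
    have hmod := Nat.div_add_mod n (2*c)
    have hmlt : n % (2*c) < 2*c := Nat.mod_lt n hc0
    set q := n / (2*c) with hq
    have hq1 : 1 ≤ q := (Nat.one_le_div_iff hc0).2 (by omega)
    have h1 : (n:ℝ) < 2*(c:ℝ)*(q:ℝ) + 2*c := by
      have h1n : n < 2*c*q + 2*c := by omega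
      exact_mod_cast h1n
    have hcm' : (c:ℝ) ≤ m := by exact_mod_cast hcm
    have hc0' : (1:ℝ) ≤ c := by exact_mod_cast hc1
    have hq1' : (1:ℝ) ≤ q := by exact_mod_cast hq1
    rw [div_le_iff₀ hm4]
    have e1 : 2*(c:ℝ)*q ≤ 2*m*q := by nlinarith
    have e2 : (2:ℝ)*m ≤ 2*m*q := by nlinarith
    nlinarith
  -- lower bound on the number of inner tuples g
  have hNh : ∀ hf : Fin (m-k) → Fin n, n / 2 ≤ ((hf ⟨0, by omega⟩ : Fin n) : ℕ) →
      (n / 2 / k) ^ k ≤ (Finset.univ.filter (fun g : Fin k → Fin n =>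
        (∀ a b, a < b → g a < g b) ∧ ∀ a, g a < hf ⟨0, by omega⟩)).card := by
    intro hf hh0
    set b0 := ((hf ⟨0, by omega⟩ : Fin n) : ℕ) with hb0
    have hb0n : b0 < n := (hf _).isLt
    set q := b0 / k with hq
    have hkq : k * q ≤ b0 := by
      rw [mul_comm]; exact Nat.div_mul_le_self _ _
    have hGlt0 : ∀ (t : Fin k → Fin q) (a : Fin k), (a:ℕ) * q + (t a : ℕ) < k * q := by
      intro t a
      have h1 : (a:ℕ) * q + (t a :ℕ) < ((a:ℕ)+1) * q := by
        have := (t a).isLt; rw [Nat.succ_mul]; omega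
      have h2 : ((a:ℕ)+1) * q ≤ k * q := Nat.mul_le_mul_right _ (by have := a.isLt; omega)
      omega
    have hGlt : ∀ (t : Fin k → Fin q) (a : Fin k), (a:ℕ) * q + (t a : ℕ) < n :=
      fun t a => lt_of_lt_of_le (hGlt0 t a) (le_trans hkq hb0n.le)
    set G' : (Fin k → Fin q) → (Fin k → Fin n) :=
      fun t a => ⟨(a:ℕ) * q + (t a : ℕ), hGlt t a⟩ with hG'
    have hG'inj : Function.Injective G' := by
      intro t t' htt'
      funext a
      have h2 : (a:ℕ)*q + (t a : ℕ) = (a:ℕ)*q + (t' a :ℕ) :=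
        congrArg Fin.val (congrFun htt' a)
      exact Fin.ext (by omega)
    have hG'mem : ∀ t, G' t ∈ Finset.univ.filter (fun g : Fin k → Fin n =>
        (∀ a b, a < b → g a < g b) ∧ ∀ a, g a < hf ⟨0, by omega⟩) := by
      intro t
      rw [Finset.mem_filter]
      refine ⟨Finset.mem_univ _, fun a b hab => ?_, fun a => ?_⟩
      · have hab' : (a:ℕ) + 1 ≤ (b:ℕ) := hab
        have h1 : ((a:ℕ)+1) * q ≤ (b:ℕ) * q := Nat.mul_le_mul_right _ hab'
        have h2 := (t a).isLt
        show (a:ℕ) * q + (t a : ℕ) < (b:ℕ) * q + (t b : ℕ)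
        rw [Nat.succ_mul] at h1
        omega
      · show (a:ℕ) * q + (t a : ℕ) < b0
        exact lt_of_lt_of_le (hGlt0 t a) hkq
    calc (n/2/k)^k ≤ q ^ k := Nat.pow_le_pow_left (Nat.div_le_div_right hh0) k
      _ = Fintype.card (Fin k → Fin q) := by simp
      _ = (Finset.univ.image G').card := by
          rw [Finset.card_image_of_injective _ hG'inj, Finset.card_univ]
      _ ≤ _ := Finset.card_le_card (fun x hx => by
          obtain ⟨t, -, rfl⟩ := Finset.mem_image.1 hx; exact hG'mem t)
  -- the good family of outer index tuples
  set Qh := n / 2 / (m - k) with hQhdef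
  have hHlt : ∀ (t : Fin (m-k) → Fin Qh) (j : Fin (m-k)), n/2 + (j:ℕ)*Qh + (t j :ℕ) < n := by
    intro t j
    have h1 : (j:ℕ)*Qh + (t j:ℕ) < ((j:ℕ)+1)*Qh := by
      have := (t j).isLt; rw [Nat.succ_mul]; omega
    have h2 : ((j:ℕ)+1)*Qh ≤ (m-k)*Qh := Nat.mul_le_mul_right _ (by have := j.isLt; omega)
    have h3 : (m-k)*Qh ≤ n/2 := by rw [hQhdef, mul_comm]; exact Nat.div_mul_le_self _ _
    omega
  set H : (Fin (m-k) → Fin Qh) → (Fin (m-k) → Fin n) :=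
    fun t j => ⟨n/2 + (j:ℕ)*Qh + (t j:ℕ), hHlt t j⟩ with hHdef
  have hHinj : Function.Injective H := by
    intro t t' htt'
    funext j
    have h2 : n/2 + (j:ℕ)*Qh + (t j:ℕ) = n/2 + (j:ℕ)*Qh + (t' j:ℕ) :=
      congrArg Fin.val (congrFun htt' j)
    exact Fin.ext (by omega)
  have hHmono : ∀ t, ∀ a b : Fin (m-k), a < b → H t a < H t b := by
    intro t a b hab
    have hab' : (a:ℕ) + 1 ≤ (b:ℕ) := hab
    have h1 : ((a:ℕ)+1) * Qh ≤ (b:ℕ) * Qh := Nat.mul_le_mul_right _ hab'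
    have h2 := (t a).isLt
    show n/2 + (a:ℕ)*Qh + (t a:ℕ) < n/2 + (b:ℕ)*Qh + (t b:ℕ)
    rw [Nat.succ_mul] at h1
    omega
  have hH0 : ∀ t, ((H t ⟨0, by omega⟩ : Fin n) : ℕ) = n/2 + (t ⟨0, by omega⟩ : ℕ) := by
    intro t
    show n/2 + 0*Qh + (t ⟨0, by omega⟩ : ℕ) = _
    omega
  -- rewrite the left-hand side of the goal
  rw [hLHS, show p * (k:ℝ) + ((m:ℝ) - (k:ℝ)) = p * k + ((m-k:ℕ):ℝ) from by
    rw [Nat.cast_sub (by omega : k ≤ m)]]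
  -- restrict the sum to the good family
  have hsubset : Finset.image H Finset.univ ⊆ Finset.univ.filter
      (fun h : Fin (m-k) → Fin n =>
        (∀ a b, a < b → h a < h b) ∧ k ≤ ((h ⟨0, by omega⟩ : Fin n):ℕ)) := by
    intro x hx
    obtain ⟨t, -, rfl⟩ := Finset.mem_image.1 hx
    rw [Finset.mem_filter]
    exact ⟨Finset.mem_univ _, hHmono t, by rw [hH0]; omega⟩
  refine le_trans ?_ (Finset.sum_le_sum_of_subset_of_nonneg hsubset fun h _ _ => ?_)
  swap
  · -- nonnegativity of each term
    refine integral_nonneg_of_ae ?_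
    have haen : ∀ᵐ ω ∂μ, ∀ g ∈ Finset.univ.filter (fun g : Fin k → Fin n =>
        (∀ a b, a < b → g a < g b) ∧ ∀ a, g a < h ⟨0, by omega⟩),
        0 ≤ condExp (sigmaOf X fun i => ∃ j, h j = i) μ
          (fun ω' => Y fun jm =>
            X (Fin.append g h (Fin.cast (by omega : m = k + (m-k)) jm)) ω') ω := by
      rw [Filter.eventually_all_finset]
      intro g _
      exact (condExp_nonneg (Filter.Eventually.of_forall fun ω => hY0 _)).mono fun ω hω => hω
    filter_upwards [haen] with ω hω
    exact Real.rpow_nonneg (Finset.sum_nonneg hω) p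
  rw [Finset.sum_image (fun t _ t' _ htt' => hHinj htt')]
  have hk0 : ∀ t : Fin (m-k) → Fin Qh, k ≤ ((H t ⟨0, by omega⟩ : Fin n):ℕ) :=
    fun t => by rw [hH0]; omega
  rw [Finset.sum_congr rfl (fun t _ => hterm (H t) (hHmono t) (hk0 t))]
  refine le_trans (b := ∑ _t : Fin (m-k) → Fin Qh, (((n / 2 / k : ℕ) : ℝ)^k)^p * D) ?_
    (Finset.sum_le_sum fun t _ => ?_)
  swap
  · refine mul_le_mul_of_nonneg_right ?_ hD0
    refine Real.rpow_le_rpow (by positivity) ?_ (by linarith)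
    have h2 := hNh (H t) (by rw [hH0]; omega)
    exact_mod_cast h2
  rw [Finset.sum_const, Finset.card_univ, nsmul_eq_mul]
  have hcardQ : (Fintype.card (Fin (m-k) → Fin Qh) : ℝ) = ((Qh:ℕ):ℝ)^(m-k) := by
    rw [Fintype.card_fun]
    push_cast
    simp
  rw [hcardQ]
  -- final numeric inequality
  have hQgb : (n:ℝ)/(4*m) ≤ ((n/2/k : ℕ):ℝ) := hdivb k hk (by omega)
  have hQhb : (n:ℝ)/(4*m) ≤ ((Qh : ℕ):ℝ) := hdivb (m-k) (by omega) (by omega)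
  have hn0 : (0:ℝ) < n := by exact_mod_cast (show 0 < n by omega)
  have hb0' : (0:ℝ) ≤ (n:ℝ)/(4*m) := by positivity
  have hmain : ((4*m:ℝ))⁻¹ ^ (p * k) * ((4*m:ℝ))⁻¹ ^ (m-k) * (n:ℝ)^(p*(k:ℝ) + ((m-k:ℕ):ℝ))
      ≤ ((Qh:ℕ):ℝ)^(m-k) * (((n/2/k : ℕ):ℝ)^k)^p := by
    rw [Real.rpow_add hn0, Real.rpow_natCast]
    have e2 : ((4*(m:ℝ))⁻¹) ^ (p*(k:ℝ)) * (n:ℝ)^(p*(k:ℝ)) = ((n:ℝ)/(4*m)) ^ (p*(k:ℝ)) := by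
      rw [← Real.mul_rpow (by positivity) (by positivity), inv_mul_eq_div]
    have e3 : ((4*(m:ℝ))⁻¹) ^ (m-k) * (n:ℝ)^(m-k) = ((n:ℝ)/(4*m)) ^ (m-k) := by
      rw [← mul_pow, inv_mul_eq_div]
    calc ((4*m:ℝ))⁻¹ ^ (p*(k:ℝ)) * ((4*m:ℝ))⁻¹ ^ (m-k) * ((n:ℝ)^(p*(k:ℝ)) * (n:ℝ)^(m-k))
        = (((4*(m:ℝ))⁻¹) ^ (p*(k:ℝ)) * (n:ℝ)^(p*(k:ℝ)))
            * (((4*(m:ℝ))⁻¹) ^ (m-k) * (n:ℝ)^(m-k)) := by ring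
      _ = (((n:ℝ)/(4*m)) ^ (p*(k:ℝ))) * ((n:ℝ)/(4*m))^(m-k) := by rw [e2, e3]
      _ ≤ (((n/2/k : ℕ):ℝ)^k)^p * ((Qh:ℕ):ℝ)^(m-k) := by
          refine mul_le_mul ?_ (pow_le_pow_left₀ hb0' hQhb _) (by positivity) (by positivity)
          rw [show p * (k:ℝ) = (k:ℝ) * p from mul_comm _ _, Real.rpow_mul hb0',
            Real.rpow_natCast]
          exact Real.rpow_le_rpow (by positivity) (pow_le_pow_left₀ hb0' hQgb _) (by linarith)
      _ = ((Qh:ℕ):ℝ)^(m-k) * (((n/2/k : ℕ):ℝ)^k)^p := mul_comm _ _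
  refine le_trans (mul_le_mul_of_nonneg_right hmain hD0) ?_
  exact le_of_eq (by ring)
end

section
/- Let X_1,...,X_n be i.i.d. nonnegative random variables with E[X_1^p] < ∞, p ≥ 1. Then A(p) · max( n^p (E[X_1])^p, n · E[X_1^p] ) ≤ E[(Σ_{k=1}^n X_k)^p] ≤ B(p) · max( n^p (E[X_1])^p, n · E[X_1^p] ) for constants A(p), B(p) > 0 depending only on p. -/
open MeasureTheory ProbabilityTheory Finset

lemma aux_rpow_split {a p : ℝ} (ha : 0 ≤ a) (hp : 0 < p) : a ^ p = a * a ^ (p - 1) := by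
  rcases eq_or_lt_of_le ha with h | h
  · rw [← h, Real.zero_rpow hp.ne', zero_mul]
  · have h1 : a ^ p = a ^ (1 + (p - 1)) := by ring_nf
    rw [h1, Real.rpow_add h, Real.rpow_one]

lemma aux_two_rpow {a b q : ℝ} (ha : 0 ≤ a) (hb : 0 ≤ b) (hq : 0 ≤ q) :
    (a + b) ^ q ≤ 2 ^ q * (a ^ q + b ^ q) := by
  have h1 : (a + b) ^ q ≤ (2 * max a b) ^ q := by
    apply Real.rpow_le_rpow (by linarith) _ hq
    rcases le_total a b with h | h
    · simp [max_eq_right h]; linarith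
    · simp [max_eq_left h]; linarith
  refine h1.trans ?_
  rw [Real.mul_rpow (by norm_num) (le_max_of_le_left ha)]
  gcongr
  rcases le_total a b with h | h
  · rw [max_eq_right h]; have := Real.rpow_nonneg ha q; linarith
  · rw [max_eq_left h]; have := Real.rpow_nonneg hb q; linarith

lemma aux_le_rpow_add_one {a p : ℝ} (ha : 0 ≤ a) (hp : 1 ≤ p) : a ≤ a ^ p + 1 := by
  rcases le_total a 1 with h | h
  · have := Real.rpow_nonneg ha p; linarith
  · calc a = a ^ (1:ℝ) := (Real.rpow_one a).symm
    _ ≤ a ^ p := Real.rpow_le_rpow_of_exponent_le h hp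
    _ ≤ a ^ p + 1 := by linarith

lemma aux_rpow_sub_one_le {a p : ℝ} (ha : 0 ≤ a) (hp : 1 ≤ p) : a ^ (p - 1) ≤ a ^ p + 1 := by
  rcases eq_or_lt_of_le ha with h | h
  · rcases eq_or_lt_of_le hp with h1 | h1
    · rw [← h, ← h1]; norm_num
    · rw [← h, Real.zero_rpow (by linarith), Real.zero_rpow (by linarith)]; norm_num
  · rcases le_total a 1 with h2 | h2
    · have : a ^ (p-1) ≤ 1 := Real.rpow_le_one ha h2 (by linarith)
      have := Real.rpow_nonneg ha p; linarith
    · have : a ^ (p-1) ≤ a ^ p := Real.rpow_le_rpow_of_exponent_le h2 (by linarith)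
      linarith

lemma aux_young {a p ε : ℝ} (ha : 0 ≤ a) (hp : 1 ≤ p) (hε : 0 < ε) :
    a ^ (p - 1) ≤ ε * a ^ p + ε ^ (1 - p) := by
  rcases le_total a ε⁻¹ with h | h
  · have h1 : a ^ (p-1) ≤ (ε⁻¹) ^ (p-1) := Real.rpow_le_rpow ha h (by linarith)
    have h2 : (ε⁻¹ : ℝ) ^ (p-1) = ε ^ (1-p) := by
      rw [← Real.rpow_neg_one ε, ← Real.rpow_mul hε.le]
      ring_nf
    have h3 : 0 ≤ ε * a ^ p := mul_nonneg hε.le (Real.rpow_nonneg ha p)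
    rw [h2] at h1; linarith
  · have ha' : 0 < a := lt_of_lt_of_le (by positivity) h
    have h1 : (1:ℝ) ≤ ε * a := by
      rw [← mul_inv_cancel₀ hε.ne']
      exact mul_le_mul_of_nonneg_left h hε.le
    have h2 : a ^ (p-1) ≤ (ε * a) * a ^ (p-1) := by
      nlinarith [Real.rpow_nonneg ha (p-1)]
    have h3 : (ε * a) * a ^ (p-1) = ε * a ^ p := by
      rw [aux_rpow_split ha (by linarith : (0:ℝ) < p), mul_assoc]
    have h4 : (0:ℝ) ≤ ε ^ (1-p) := Real.rpow_nonneg hε.le _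
    linarith

lemma aux_superadd {ι : Type*} (s : Finset ι) (f : ι → ℝ) (hf : ∀ i, 0 ≤ f i) {p : ℝ}
    (hp : 1 ≤ p) : ∑ i ∈ s, f i ^ p ≤ (∑ i ∈ s, f i) ^ p := by
  classical
  induction s using Finset.cons_induction with
  | empty => simp [Real.zero_rpow (by positivity : p ≠ 0)]
  | cons a s ha ih =>
      rw [Finset.sum_cons, Finset.sum_cons]
      have hs : 0 ≤ ∑ i ∈ s, f i := Finset.sum_nonneg fun i _ => hf i
      have h1 : f a ^ p + (∑ i ∈ s, f i) ^ p ≤ (f a + ∑ i ∈ s, f i) ^ p := by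
        have h := NNReal.add_rpow_le_rpow_add (⟨f a, hf a⟩ : NNReal) ⟨∑ i ∈ s, f i, hs⟩ hp
        have h2 := NNReal.coe_le_coe.2 h
        push_cast [NNReal.coe_rpow] at h2
        exact h2
      linarith

lemma aux_sum_rpow_le {ι : Type*} (s : Finset ι) (f : ι → ℝ) (hf : ∀ i, 0 ≤ f i) {p : ℝ}
    (hp : 1 ≤ p) : (∑ i ∈ s, f i) ^ p ≤ (2 ^ p) ^ s.card * ∑ i ∈ s, f i ^ p := by
  classical
  induction s using Finset.cons_induction with
  | empty => simp [Real.zero_rpow (by positivity : p ≠ 0)]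
  | cons a s ha ih =>
      rw [Finset.sum_cons, Finset.sum_cons, Finset.card_cons]
      have hs : 0 ≤ ∑ i ∈ s, f i := Finset.sum_nonneg fun i _ => hf i
      have h2 : (f a + ∑ i ∈ s, f i) ^ p ≤ 2 ^ p * (f a ^ p + (∑ i ∈ s, f i) ^ p) :=
        aux_two_rpow (hf a) hs (by linarith)
      have h4 : (1:ℝ) ≤ 2 ^ p := Real.one_le_rpow (by norm_num) (by linarith)
      have h5 : (1:ℝ) ≤ (2^p : ℝ)^s.card := one_le_pow₀ h4
      have h6 : 0 ≤ f a ^ p := Real.rpow_nonneg (hf a) p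
      have h7 : 0 ≤ ∑ i ∈ s, f i ^ p := Finset.sum_nonneg fun i _ => Real.rpow_nonneg (hf i) p
      calc (f a + ∑ i ∈ s, f i) ^ p ≤ 2 ^ p * (f a ^ p + (∑ i ∈ s, f i) ^ p) := h2
        _ ≤ 2 ^ p * (f a ^ p + (2^p)^s.card * ∑ i ∈ s, f i ^ p) := by
            have h8 : (0:ℝ) ≤ 2 ^ p := by linarith
            have := ih
            nlinarith
        _ ≤ (2^p)^(s.card + 1) * (f a ^ p + ∑ i ∈ s, f i ^ p) := by
            rw [pow_succ]
            have h8 : (0:ℝ) ≤ 2 ^ p := by linarith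
            have h9 : (0:ℝ) ≤ (2^p:ℝ)^s.card := by positivity
            nlinarith [mul_nonneg (mul_nonneg h9 (sub_nonneg.2 h4)) h6, mul_nonneg (mul_nonneg h8 (sub_nonneg.2 h5)) h6]


/-- The `m = 1` case of Theorem 1: a two-sided Rosenthal-type bound for sums of
i.i.d. nonnegative random variables. -/
theorem theorem1_order_one (p : ℝ) (hp : 1 ≤ p) :
    ∃ A B : ℝ, 0 < A ∧ 0 < B ∧
      ∀ (Ω : Type) (_ : MeasurableSpace Ω)
        (μ : Measure Ω) (_ : IsProbabilityMeasure μ)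
        (n : ℕ) (hn : 1 ≤ n) (X : Fin n → Ω → ℝ)
        (_ : ∀ i, Measurable (X i))
        (_ : iIndepFun X μ)
        (_ : ∀ i j, Measure.map (X i) μ = Measure.map (X j) μ)
        (_ : ∀ i ω, 0 ≤ X i ω)
        (_ : Integrable (fun ω => X ⟨0, hn⟩ ω ^ p) μ),
        A * max ((n : ℝ) ^ p * (∫ ω, X ⟨0, hn⟩ ω ∂μ) ^ p)
            ((n : ℝ) * ∫ ω, X ⟨0, hn⟩ ω ^ p ∂μ)
          ≤ ∫ ω, (∑ k, X k ω) ^ p ∂μ ∧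
        ∫ ω, (∑ k, X k ω) ^ p ∂μ
          ≤ B * max ((n : ℝ) ^ p * (∫ ω, X ⟨0, hn⟩ ω ∂μ) ^ p)
              ((n : ℝ) * ∫ ω, X ⟨0, hn⟩ ω ^ p ∂μ) := by
  have hp0 : (0:ℝ) < p := lt_of_lt_of_le one_pos hp
  have h2p : (0:ℝ) < 2 ^ p := Real.rpow_pos_of_pos two_pos p
  have h2pp : (0:ℝ) < 2 ^ (p * p) := Real.rpow_pos_of_pos two_pos _
  refine ⟨1, 2 ^ p + 2 ^ (p * p), one_pos, by positivity, ?_⟩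
  intro Ω mΩ μ hμ n hn X hXm hXi hXid hXnn hXint
  set i0 : Fin n := ⟨0, hn⟩ with hi0
  set S : Ω → ℝ := fun ω => ∑ k, X k ω with hS
  have hrp : Measurable fun x : ℝ => x ^ p := by fun_prop
  have hrq : Measurable fun x : ℝ => x ^ (p - 1) := by fun_prop
  have hSm : Measurable S := Finset.measurable_sum univ fun i _ => hXm i
  have hSnn : ∀ ω, 0 ≤ S ω := fun ω => Finset.sum_nonneg fun i _ => hXnn i ω
  -- identical distribution transfer
  have key : ∀ (g : ℝ → ℝ), Measurable g → ∀ i, ∫ ω, g (X i ω) ∂μ = ∫ ω, g (X i0 ω) ∂μ := by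
    intro g hg i
    rw [← integral_map (hXm i).aemeasurable hg.aestronglyMeasurable, hXid i i0,
      integral_map (hXm i0).aemeasurable hg.aestronglyMeasurable]
  have keyInt : ∀ (g : ℝ → ℝ), Measurable g →
      Integrable (fun ω => g (X i0 ω)) μ → ∀ i, Integrable (fun ω => g (X i ω)) μ := by
    intro g hg h0 i
    have h1 : Integrable (g ∘ X i0) μ := h0
    rw [← integrable_map_measure hg.aestronglyMeasurable (hXm i0).aemeasurable, ← hXid i i0,
      integrable_map_measure hg.aestronglyMeasurable (hXm i).aemeasurable] at h1
    exact h1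
  have hXpint : ∀ i, Integrable (fun ω => X i ω ^ p) μ := keyInt _ hrp hXint
  have hXEp : ∀ i, ∫ ω, X i ω ^ p ∂μ = ∫ ω, X i0 ω ^ p ∂μ := key _ hrp
  have hXint1 : ∀ i, Integrable (X i) μ := by
    intro i
    refine Integrable.mono' ((hXpint i).add (integrable_const 1)) (hXm i).aestronglyMeasurable ?_
    filter_upwards with ω
    rw [Real.norm_of_nonneg (hXnn i ω)]
    exact aux_le_rpow_add_one (hXnn i ω) hp
  have hXE : ∀ i, ∫ ω, X i ω ∂μ = ∫ ω, X i0 ω ∂μ := key _ measurable_id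
  have hSint : Integrable S μ := integrable_finset_sum univ fun i _ => hXint1 i
  have hSp_int : Integrable (fun ω => S ω ^ p) μ := by
    refine Integrable.mono'
      (((integrable_finset_sum univ fun i _ => hXpint i).const_mul ((2^p)^n)))
      (hrp.comp hSm).aestronglyMeasurable ?_
    filter_upwards with ω
    rw [Real.norm_of_nonneg (Real.rpow_nonneg (hSnn ω) p)]
    have := aux_sum_rpow_le univ (fun i => X i ω) (fun i => hXnn i ω) hp
    simpa [card_univ] using this
  have hSq_int : Integrable (fun ω => S ω ^ (p - 1)) μ := by
    refine Integrable.mono' (hSp_int.add (integrable_const 1))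
      (hrq.comp hSm).aestronglyMeasurable ?_
    filter_upwards with ω
    rw [Real.norm_of_nonneg (Real.rpow_nonneg (hSnn ω) _)]
    exact aux_rpow_sub_one_le (hSnn ω) hp
  have hES : ∫ ω, S ω ∂μ = n * ∫ ω, X i0 ω ∂μ := by
    rw [hS]
    rw [integral_finset_sum univ fun i _ => hXint1 i]
    rw [Finset.sum_congr rfl fun i _ => hXE i, Finset.sum_const, card_univ, Fintype.card_fin, nsmul_eq_mul]
  have hEXnn : 0 ≤ ∫ ω, X i0 ω ∂μ := integral_nonneg fun ω => hXnn i0 ω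
  have hEXpnn : 0 ≤ ∫ ω, X i0 ω ^ p ∂μ := integral_nonneg fun ω => Real.rpow_nonneg (hXnn i0 ω) p
  -- LOWER BOUND
  have lower1 : (n : ℝ) * ∫ ω, X i0 ω ^ p ∂μ ≤ ∫ ω, S ω ^ p ∂μ := by
    have h1 : ∫ ω, (∑ i, X i ω ^ p) ∂μ ≤ ∫ ω, S ω ^ p ∂μ := by
      refine integral_mono (integrable_finset_sum univ fun i _ => hXpint i) hSp_int ?_
      intro ω
      exact aux_superadd univ (fun i => X i ω) (fun i => hXnn i ω) hp
    rw [integral_finset_sum univ fun i _ => hXpint i] at h1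
    rw [Finset.sum_congr rfl fun i _ => hXEp i, Finset.sum_const, card_univ, Fintype.card_fin, nsmul_eq_mul] at h1
    exact h1
  have lower2 : (n : ℝ) ^ p * (∫ ω, X i0 ω ∂μ) ^ p ≤ ∫ ω, S ω ^ p ∂μ := by
    have hjensen : (∫ ω, S ω ∂μ) ^ p ≤ ∫ ω, S ω ^ p ∂μ := by
      have := ConvexOn.map_integral_le (μ := μ) (f := S) (convexOn_rpow hp)
        (fun x _ => (Real.continuousAt_rpow_const x p (Or.inr hp0.le)).continuousWithinAt)
        isClosed_Ici (Filter.Eventually.of_forall fun ω => hSnn ω) hSint hSp_int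
      exact this
    rw [hES] at hjensen
    rwa [Real.mul_rpow (Nat.cast_nonneg n) hEXnn] at hjensen
  refine ⟨by rw [one_mul]; exact max_le lower2 lower1, ?_⟩
  -- UPPER BOUND
  set e := ∫ ω, X i0 ω ∂μ with he
  set ep := ∫ ω, X i0 ω ^ p ∂μ with hep
  set M := max ((n:ℝ) ^ p * e ^ p) ((n:ℝ) * ep) with hM
  have hMnn : 0 ≤ M := le_max_of_le_right (mul_nonneg (Nat.cast_nonneg n) hEXpnn)
  rcases eq_or_lt_of_le hEXnn with hEX0 | hEX0
  · -- degenerate case : E X = 0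
    have hae : ∀ i, ∀ᵐ ω ∂μ, X i ω = 0 := by
      intro i
      have h1 : ∫ ω, X i ω ∂μ = 0 := by rw [hXE i, ← hEX0]
      have h2 := (integral_eq_zero_iff_of_nonneg (fun ω => hXnn i ω) (hXint1 i)).1 h1
      filter_upwards [h2] with ω hω
      simpa using hω
    have hSae : ∀ᵐ ω ∂μ, S ω = 0 := by
      have := eventually_countable_forall.2 fun i : Fin n => hae i
      filter_upwards [this] with ω hω
      exact Finset.sum_eq_zero fun i _ => hω i
    have hT0 : ∫ ω, S ω ^ p ∂μ = 0 := by
      have h3 : (fun ω => S ω ^ p) =ᵐ[μ] (fun _ => (0:ℝ)) := by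
        filter_upwards [hSae] with ω hω
        rw [hω, Real.zero_rpow hp0.ne']
      rw [integral_congr_ae h3, integral_const, smul_zero]
    have hep0 : ep = 0 := by
      have h3 : (fun ω => X i0 ω ^ p) =ᵐ[μ] (fun _ => (0:ℝ)) := by
        filter_upwards [hae i0] with ω hω
        rw [hω, Real.zero_rpow hp0.ne']
      rw [hep, integral_congr_ae h3, integral_const, smul_zero]
    rw [hT0]
    have : M = 0 := by
      rw [hM, ← hEX0, hep0, Real.zero_rpow hp0.ne']
      simp
    rw [this, mul_zero]
  · -- main case : E X > 0
    set T := ∫ ω, S ω ^ p ∂μ with hT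
    set c := 2 ^ p * ((n:ℝ) * e) with hc
    have hne : (0:ℝ) < (n:ℝ) * e := by
      have : (1:ℝ) ≤ (n:ℝ) := by exact_mod_cast hn
      nlinarith
    have hcpos : 0 < c := by positivity
    set ε := c⁻¹ with hε
    have hεpos : 0 < ε := by positivity
    -- the one-sided recursion
    have hXiS_int : ∀ i, Integrable (fun ω => X i ω * S ω ^ (p-1)) μ := by
      intro i
      refine Integrable.mono' hSp_int ((hXm i).mul (hrq.comp hSm)).aestronglyMeasurable ?_
      filter_upwards with ω
      have hle : X i ω ≤ S ω := Finset.single_le_sum (fun j _ => hXnn j ω) (mem_univ i)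
      rw [Real.norm_of_nonneg (mul_nonneg (hXnn i ω) (Real.rpow_nonneg (hSnn ω) _))]
      calc X i ω * S ω ^ (p-1) ≤ S ω * S ω ^ (p-1) :=
            mul_le_mul_of_nonneg_right hle (Real.rpow_nonneg (hSnn ω) _)
        _ = S ω ^ p := (aux_rpow_split (hSnn ω) hp0).symm
    have step1 : T = ∑ i, ∫ ω, X i ω * S ω ^ (p-1) ∂μ := by
      rw [hT, ← integral_finset_sum univ fun i _ => hXiS_int i]
      refine integral_congr_ae (Filter.Eventually.of_forall fun ω => ?_)
      show S ω ^ p = ∑ i, X i ω * S ω ^ (p - 1)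
      rw [aux_rpow_split (hSnn ω) hp0]
      rw [hS, Finset.sum_mul]
    -- the partial sums without index i
    have hSidef : ∀ (i : Fin n) ω, X i ω + ∑ j ∈ univ.erase i, X j ω = S ω := by
      intro i ω
      exact Finset.add_sum_erase univ (fun j => X j ω) (mem_univ i)
    have hSinn : ∀ (i : Fin n) ω, 0 ≤ ∑ j ∈ univ.erase i, X j ω :=
      fun i ω => Finset.sum_nonneg fun j _ => hXnn j ω
    have hSile : ∀ (i : Fin n) ω, (∑ j ∈ univ.erase i, X j ω) ≤ S ω := by
      intro i ω
      rw [← hSidef i ω]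
      have := hXnn i ω
      linarith
    have hSim : ∀ i : Fin n, Measurable fun ω => ∑ j ∈ univ.erase i, X j ω :=
      fun i => Finset.measurable_sum _ fun j _ => hXm j
    have hq0 : (0:ℝ) ≤ p - 1 := by linarith
    have hXiSiq_int : ∀ i, Integrable
        (fun ω => X i ω * (∑ j ∈ univ.erase i, X j ω) ^ (p-1)) μ := by
      intro i
      refine Integrable.mono' hSp_int
        ((hXm i).mul (hrq.comp (hSim i))).aestronglyMeasurable ?_
      filter_upwards with ω
      rw [Real.norm_of_nonneg (mul_nonneg (hXnn i ω) (Real.rpow_nonneg (hSinn i ω) _))]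
      have hle : X i ω ≤ S ω := Finset.single_le_sum (fun j _ => hXnn j ω) (mem_univ i)
      have h1 : (∑ j ∈ univ.erase i, X j ω) ^ (p-1) ≤ S ω ^ (p-1) :=
        Real.rpow_le_rpow (hSinn i ω) (hSile i ω) hq0
      calc X i ω * (∑ j ∈ univ.erase i, X j ω) ^ (p-1)
          ≤ S ω * S ω ^ (p-1) := by
            have := Real.rpow_nonneg (hSinn i ω) (p-1)
            have := hSnn ω
            have := hXnn i ω
            nlinarith
        _ = S ω ^ p := (aux_rpow_split (hSnn ω) hp0).symm
    have hSiq_int : ∀ i, Integrable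
        (fun ω => (∑ j ∈ univ.erase i, X j ω) ^ (p-1)) μ := by
      intro i
      refine Integrable.mono' (hSp_int.add (integrable_const 1))
        (hrq.comp (hSim i)).aestronglyMeasurable ?_
      filter_upwards with ω
      rw [Real.norm_of_nonneg (Real.rpow_nonneg (hSinn i ω) _)]
      have h1 : (∑ j ∈ univ.erase i, X j ω) ^ (p-1)
          ≤ (∑ j ∈ univ.erase i, X j ω) ^ p + 1 := aux_rpow_sub_one_le (hSinn i ω) hp
      have h2 : (∑ j ∈ univ.erase i, X j ω) ^ p ≤ S ω ^ p :=
        Real.rpow_le_rpow (hSinn i ω) (hSile i ω) hp0.le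
      simp only [Pi.add_apply]
      linarith
    -- independence
    have hind : ∀ i, ∫ ω, X i ω * (∑ j ∈ univ.erase i, X j ω) ^ (p-1) ∂μ
        = e * ∫ ω, (∑ j ∈ univ.erase i, X j ω) ^ (p-1) ∂μ := by
      intro i
      have hsum_eq : (∑ j ∈ univ.erase i, X j) = fun ω => ∑ j ∈ univ.erase i, X j ω := by
        funext ω
        simp [Finset.sum_apply]
      have hI0 : IndepFun (∑ j ∈ univ.erase i, X j) (X i) μ :=
        hXi.indepFun_finsetSum_of_notMem hXm (Finset.notMem_erase i univ)
      rw [hsum_eq] at hI0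
      have hI1 := (hI0.symm).comp (measurable_id : Measurable fun x : ℝ => x) hrq
      have h2 := IndepFun.integral_mul_eq_mul_integral hI1 (hXint1 i).aestronglyMeasurable (hSiq_int i).aestronglyMeasurable
      have h3 : ∫ ω, X i ω * (∑ j ∈ univ.erase i, X j ω) ^ (p-1) ∂μ
          = (∫ ω, X i ω ∂μ) * ∫ ω, (∑ j ∈ univ.erase i, X j ω) ^ (p-1) ∂μ := by
        simpa [Function.comp, Pi.mul_apply] using h2
      rw [h3, hXE i]
    -- bound on E S^(p-1)
    have hSq_bound : ∫ ω, S ω ^ (p-1) ∂μ ≤ ε * T + ε ^ (1-p) := by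
      have h1 : ∫ ω, S ω ^ (p-1) ∂μ ≤ ∫ ω, (ε * S ω ^ p + ε ^ (1-p)) ∂μ := by
        refine integral_mono hSq_int ((hSp_int.const_mul ε).add (integrable_const _)) ?_
        intro ω
        exact aux_young (hSnn ω) hp hεpos
      have h2 : ∫ ω, (ε * S ω ^ p + ε ^ (1-p)) ∂μ = ε * T + ε ^ (1-p) := by
        rw [integral_add (hSp_int.const_mul ε) (integrable_const _), integral_const_mul,
          integral_const]
        simp [hT, measure_univ]
      linarith
    have h2qnn : (0:ℝ) ≤ 2 ^ (p-1) := (Real.rpow_pos_of_pos two_pos _).le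
    have step2 : ∀ i : Fin n, ∫ ω, X i ω * S ω ^ (p-1) ∂μ
        ≤ 2 ^ (p-1) * (ep + e * (ε * T + ε ^ (1-p))) := by
      intro i
      have hpt : ∀ ω, X i ω * S ω ^ (p-1)
          ≤ 2 ^ (p-1) * (X i ω ^ p + X i ω * (∑ j ∈ univ.erase i, X j ω) ^ (p-1)) := by
        intro ω
        have h1 : S ω ^ (p-1)
            ≤ 2 ^ (p-1) * ((X i ω) ^ (p-1) + (∑ j ∈ univ.erase i, X j ω) ^ (p-1)) := by
          rw [← hSidef i ω]
          exact aux_two_rpow (hXnn i ω) (hSinn i ω) hq0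
        have h2 : X i ω * S ω ^ (p-1)
            ≤ X i ω * (2 ^ (p-1) * ((X i ω) ^ (p-1) + (∑ j ∈ univ.erase i, X j ω) ^ (p-1))) :=
          mul_le_mul_of_nonneg_left h1 (hXnn i ω)
        have h3 : X i ω * X i ω ^ (p-1) = X i ω ^ p := (aux_rpow_split (hXnn i ω) hp0).symm
        calc X i ω * S ω ^ (p-1)
            ≤ X i ω * (2 ^ (p-1) * ((X i ω) ^ (p-1) + (∑ j ∈ univ.erase i, X j ω) ^ (p-1))) := h2
          _ = 2 ^ (p-1) * (X i ω * X i ω ^ (p-1)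
              + X i ω * (∑ j ∈ univ.erase i, X j ω) ^ (p-1)) := by ring
          _ = 2 ^ (p-1) * (X i ω ^ p
              + X i ω * (∑ j ∈ univ.erase i, X j ω) ^ (p-1)) := by rw [h3]
      have hmono : ∫ ω, X i ω * S ω ^ (p-1) ∂μ
          ≤ ∫ ω, 2 ^ (p-1) * (X i ω ^ p
              + X i ω * (∑ j ∈ univ.erase i, X j ω) ^ (p-1)) ∂μ :=
        integral_mono (hXiS_int i) (((hXpint i).add (hXiSiq_int i)).const_mul _) hpt
      have heq : ∫ ω, 2 ^ (p-1) * (X i ω ^ p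
              + X i ω * (∑ j ∈ univ.erase i, X j ω) ^ (p-1)) ∂μ
          = 2 ^ (p-1) * (ep + e * ∫ ω, (∑ j ∈ univ.erase i, X j ω) ^ (p-1) ∂μ) := by
        rw [integral_const_mul, integral_add (hXpint i) (hXiSiq_int i), hXEp i, hind i]
      have hSiq_le : ∫ ω, (∑ j ∈ univ.erase i, X j ω) ^ (p-1) ∂μ ≤ ε * T + ε ^ (1-p) := by
        refine le_trans ?_ hSq_bound
        refine integral_mono (hSiq_int i) hSq_int ?_
        intro ω
        exact Real.rpow_le_rpow (hSinn i ω) (hSile i ω) hq0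
      have h4 : e * ∫ ω, (∑ j ∈ univ.erase i, X j ω) ^ (p-1) ∂μ
          ≤ e * (ε * T + ε ^ (1-p)) := mul_le_mul_of_nonneg_left hSiq_le hEXnn
      have h5 : 2 ^ (p-1) * (ep + e * ∫ ω, (∑ j ∈ univ.erase i, X j ω) ^ (p-1) ∂μ)
          ≤ 2 ^ (p-1) * (ep + e * (ε * T + ε ^ (1-p))) := by
        apply mul_le_mul_of_nonneg_left _ h2qnn
        linarith
      linarith [hmono, heq.le, heq.ge]
    have hrec : T ≤ (n:ℝ) * (2 ^ (p-1) * (ep + e * (ε * T + ε ^ (1-p)))) := by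
      calc T = ∑ i, ∫ ω, X i ω * S ω ^ (p-1) ∂μ := step1
        _
          ≤ ∑ _i : Fin n, 2 ^ (p-1) * (ep + e * (ε * T + ε ^ (1-p))) :=
            Finset.sum_le_sum fun i _ => step2 i
        _ = (n:ℝ) * (2 ^ (p-1) * (ep + e * (ε * T + ε ^ (1-p)))) := by
            rw [Finset.sum_const, card_univ, Fintype.card_fin, nsmul_eq_mul]
    -- final algebra
    have h2q : (2:ℝ) ^ (p-1) = 2 ^ p / 2 := by
      rw [Real.rpow_sub two_pos, Real.rpow_one]
    have hhalf : (n:ℝ) * (2 ^ (p-1) * (e * ε)) = 1/2 := by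
      rw [h2q, hε, hc]
      field_simp
    have hεP : ε ^ (1-p) = c ^ (p-1) := by
      rw [hε, ← Real.rpow_neg_one c, ← Real.rpow_mul hcpos.le]
      ring_nf
    have hc2 : (2:ℝ) ^ (p-1) * ((n:ℝ) * e) = c / 2 := by
      rw [h2q, hc]; ring
    have hcp : c * c ^ (p-1) = c ^ p := (aux_rpow_split hcpos.le hp0).symm
    have h8 : c ^ p = 2 ^ (p*p) * ((n:ℝ) * e) ^ p := by
      rw [hc, Real.mul_rpow h2p.le hne.le, ← Real.rpow_mul (by norm_num : (0:ℝ) ≤ 2)]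
    have hne_leM : ((n:ℝ) * e) ^ p ≤ M := by
      rw [Real.mul_rpow (Nat.cast_nonneg n) hEXnn]
      exact le_max_left _ _
    have hep_leM : (n:ℝ) * ep ≤ M := le_max_right _ _
    have hchain : T ≤ 2 ^ (p-1) * M + T / 2 + 2 ^ (p*p) * M / 2 := by
      have e1 : (n:ℝ) * (2 ^ (p-1) * (ep + e * (ε * T + ε ^ (1-p))))
          = 2 ^ (p-1) * ((n:ℝ) * ep) + ((n:ℝ) * (2 ^ (p-1) * (e * ε))) * T
            + (2 ^ (p-1) * ((n:ℝ) * e)) * ε ^ (1-p) := by ring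
      rw [e1, hhalf, hεP, hc2] at hrec
      have e2 : c / 2 * c ^ (p-1) = c ^ p / 2 := by rw [← hcp]; ring
      rw [e2, h8] at hrec
      have h9 : 2 ^ (p-1) * ((n:ℝ) * ep) ≤ 2 ^ (p-1) * M :=
        mul_le_mul_of_nonneg_left hep_leM h2qnn
      have h10 : 2 ^ (p*p) * ((n:ℝ) * e) ^ p ≤ 2 ^ (p*p) * M :=
        mul_le_mul_of_nonneg_left hne_leM h2pp.le
      linarith
    show T ≤ (2 ^ p + 2 ^ (p*p)) * M
    rw [h2q] at hchain
    linarith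
end
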